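/- arXiv:2601.07842 — 8 statements merged into one kernel-verified Lean document; each statement's English description precedes it below -/
import Mathlib

section
/- Let α ∈ (0, 3] and let h ∈ F(α). Then for all z ∈ 𝔻 one has Re(z·h''(z)/h'(z)) ≥ −α/2 + ((1 − |z|²)/(2α))·|h''(z)/h'(z)|². -/
open Complex Metric

/-- Membership in the family `F(α)`: `h` is analytic on the unit disk, normalized by
`h 0 = 0` and `h' 0 = 1`, locally univalent (`h' ≠ 0`), and satisfies
`Re (1 + z h''(z)/h'(z)) > 1 - α/2` on the unit disk. -/
def MemF (α : ℝ) (h : ℂ → ℂ) : Prop :=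
  DifferentiableOn ℂ h (ball 0 1) ∧ h 0 = 0 ∧ deriv h 0 = 1 ∧
  (∀ z ∈ ball (0:ℂ) 1, deriv h z ≠ 0) ∧
  (∀ z ∈ ball (0:ℂ) 1, 1 - α / 2 < (1 + z * deriv (deriv h) z / deriv h z).re)

theorem stmt0 (α : ℝ) (hα : α ∈ Set.Ioc (0:ℝ) 3) (h : ℂ → ℂ) (hF : MemF α h) :
    ∀ z ∈ ball (0:ℂ) 1,
      -α / 2 + ((1 - ‖z‖ ^ 2) / (2 * α)) *
          ‖deriv (deriv h) z / deriv h z‖ ^ 2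
        ≤ (z * deriv (deriv h) z / deriv h z).re := by
  obtain ⟨hα0, hα3⟩ := hα
  obtain ⟨hdiff, h0, hd1, hd0, hre⟩ := hF
  have hαC : (α : ℂ) ≠ 0 := Complex.ofReal_ne_zero.2 (ne_of_gt hα0)
  set d : ℂ → ℂ := deriv h with hd_def
  set dd : ℂ → ℂ := deriv d with hdd_def
  have han : AnalyticOnNhd ℂ h (ball 0 1) := hdiff.analyticOnNhd isOpen_ball
  have hdan : AnalyticOnNhd ℂ d (ball 0 1) := han.deriv
  have hddan : AnalyticOnNhd ℂ dd (ball 0 1) := hdan.deriv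
  set g : ℂ → ℂ := fun w => w * dd w / d w with hg_def
  have hgdiff : DifferentiableOn ℂ g (ball 0 1) :=
    (differentiableOn_id.mul hddan.differentiableOn).div hdan.differentiableOn hd0
  -- real part lower bound for g
  have hgre : ∀ w ∈ ball (0:ℂ) 1, -(α/2) < (g w).re := by
    intro w hw
    have := hre w hw
    rw [Complex.add_re, Complex.one_re] at this
    simpa [hg_def] using by linarith
  have hne : ∀ w ∈ ball (0:ℂ) 1, g w + (α:ℂ) ≠ 0 := by
    intro w hw hc
    have h1 := hgre w hw
    have h2 : (g w + (α:ℂ)).re = (g w).re + α := by simp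
    rw [hc] at h2
    simp at h2
    linarith
  set φ : ℂ → ℂ := fun w => g w / (g w + α) with hφ_def
  have hφdiff : DifferentiableOn ℂ φ (ball 0 1) :=
    hgdiff.div (hgdiff.add_const _) hne
  have habspos : ∀ w ∈ ball (0:ℂ) 1, 0 < ‖g w + α‖ :=
    fun w hw => norm_pos_iff.2 (hne w hw)
  have hmaps : Set.MapsTo φ (ball 0 1) (ball 0 1) := by
    intro w hw
    rw [mem_ball_zero_iff]
    have h1 := hgre w hw
    have h2 : (‖g w‖)^2 < (‖g w + α‖)^2 := by
      rw [Complex.sq_norm, Complex.sq_norm, Complex.normSq_apply, Complex.normSq_apply]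
      simp only [Complex.add_re, Complex.add_im, Complex.ofReal_re, Complex.ofReal_im, add_zero]
      nlinarith
    have h3 : ‖g w‖ < ‖g w + α‖ :=
      lt_of_pow_lt_pow_left₀ 2 (norm_nonneg _) h2
    show ‖g w / (g w + α)‖ < 1
    rw [norm_div, div_lt_one (habspos w hw)]
    exact h3
  have hg0 : g 0 = 0 := by simp [hg_def]
  have hφ0 : φ 0 = 0 := by simp [hφ_def, hg0]
  intro z hz
  have hgz : g z = z * dd z / d z := rfl
  rcases eq_or_ne z 0 with rfl | hz0
  · -- z = 0 : use the derivative form of the Schwarz lemma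
    have hdd_at : DifferentiableAt ℂ dd 0 :=
      (hddan 0 (mem_ball_self one_pos)).differentiableAt
    have hd_at : DifferentiableAt ℂ d 0 :=
      (hdan 0 (mem_ball_self one_pos)).differentiableAt
    have hd0ne : d 0 ≠ 0 := by rw [hd1]; exact one_ne_zero
    have h1 : HasDerivAt (fun w => w * dd w) (dd 0) 0 := by
      have := (hasDerivAt_id (0:ℂ)).fun_mul hdd_at.hasDerivAt
      simpa using this
    have hgd : HasDerivAt g (dd 0) 0 := by
      have h2 := h1.fun_div hd_at.hasDerivAt hd0ne
      simpa [hd1] using h2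
    have hφd : HasDerivAt φ (dd 0 / α) 0 := by
      have h3 := hgd.div (hgd.add_const (α:ℂ)) (hne 0 (mem_ball_self one_pos))
      have : (dd 0 * (g 0 + α) - g 0 * dd 0) / (g 0 + α)^2 = dd 0 / α := by
        rw [hg0, zero_add, zero_mul, sub_zero, pow_two, ← div_div, mul_div_cancel_right₀ _ hαC]
      rwa [this] at h3
    have hschwarz := Complex.norm_deriv_le_one_of_mapsTo_ball hφdiff
        (by rw [hφ0]; exact hmaps.mono_right ball_subset_closedBall) one_pos
    rw [hφd.deriv] at hschwarz
    rw [norm_div, Complex.norm_of_nonneg hα0.le, div_le_one hα0] at hschwarz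
    have habs : ‖dd 0 / d 0‖ = ‖dd 0‖ := by rw [hd1]; simp
    have h4 : ‖dd 0‖^2 ≤ α^2 := by nlinarith [norm_nonneg (dd 0)]
    have h2α : (0:ℝ) < 2 * α := by linarith
    simp only [zero_mul, zero_div, Complex.zero_re, norm_zero, habs]
    have h5 : (1 - (0:ℝ)^2)/(2*α) * ‖dd 0‖^2 ≤ α/2 := by
      rw [div_mul_eq_mul_div, div_le_iff₀ h2α]; nlinarith
    linarith
  · -- z ≠ 0
    have key := Complex.norm_le_norm_of_mapsTo_ball hφdiff (hmaps.mono_right ball_subset_closedBall) hφ0 (mem_ball_zero_iff.1 hz)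
    have hr1 : ‖z‖ < 1 := mem_ball_zero_iff.1 hz
    have hrpos : 0 < ‖z‖ := norm_pos_iff.2 hz0
    have hAB : ‖g z‖ ≤ ‖z‖ * ‖g z + α‖ := by
      have : ‖φ z‖ = ‖g z‖ / ‖g z + α‖ := by
        rw [hφ_def]; exact norm_div _ _
      rw [this, div_le_iff₀ (habspos z hz)] at key
      linarith [key]
    set r := ‖z‖ with hr_def
    set a := (g z).re with ha_def
    set b := (g z).im with hb_def
    set W := ‖dd z / d z‖ with hW_def
    have hWnn : 0 ≤ W := norm_nonneg _
    have hE : a^2 + b^2 = r^2 * W^2 := by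
      have : ‖g z‖ = r * W := by
        rw [hgz, mul_div_assoc, norm_mul]
      have h5 : Complex.normSq (g z) = (r*W)^2 := by
        rw [← Complex.sq_norm, this]
      rw [Complex.normSq_apply] at h5
      rw [← ha_def, ← hb_def] at h5
      linear_combination h5
    have hC : a^2 + b^2 ≤ r^2 * ((a + α)^2 + b^2) := by
      have hsq : ‖g z‖^2 ≤ (r * ‖g z + α‖)^2 :=
        pow_le_pow_left₀ (norm_nonneg _) hAB 2
      have e1 : ‖g z‖^2 = a^2 + b^2 := by
        rw [Complex.sq_norm, Complex.normSq_apply, ← ha_def, ← hb_def]; ring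
      have e2 : ‖g z + (α:ℂ)‖^2 = (a + α)^2 + b^2 := by
        rw [Complex.sq_norm, Complex.normSq_apply]
        simp only [Complex.add_re, Complex.add_im, Complex.ofReal_re, Complex.ofReal_im,
          add_zero]
        rw [← ha_def, ← hb_def]; ring
      rw [mul_pow, e1, e2] at hsq
      exact hsq
    have ha2 := hgre z hz
    rw [← ha_def] at ha2
    have hr2pos : (0:ℝ) < r^2 := by positivity
    have hmain : (1 - r^2) * W^2 ≤ 2*α*a + α^2 := by
      have key2 : r^2 * ((1 - r^2) * W^2) ≤ r^2 * (2*α*a + α^2) := by nlinarith [hC, hE]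
      exact le_of_mul_le_mul_left key2 hr2pos
    have h2α : (0:ℝ) < 2 * α := by linarith
    have h6 : (1 - r^2)/(2*α) * W^2 ≤ a + α/2 := by
      rw [div_mul_eq_mul_div, div_le_iff₀ h2α]; nlinarith [hmain]
    linarith
end

section
/- Let α ∈ (0, 3] and let h ∈ F(α). If there exists a point z₀ ∈ 𝔻 at which equality holds in the inequality Re(z·h''(z)/h'(z)) ≥ −α/2 + ((1 − |z|²)/(2α))·|h''(z)/h'(z)|², then there exists ζ ∈ 𝕋 such that h'(z) = (1 − ζz)^{−α} for all z ∈ 𝔻. -/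
open Complex Metric

theorem stmt1 (α : ℝ) (hα : α ∈ Set.Ioc (0:ℝ) 3) (h : ℂ → ℂ) (hF : MemF α h)
    (z₀ : ℂ) (hz₀ : z₀ ∈ ball (0:ℂ) 1)
    (heq : (z₀ * deriv (deriv h) z₀ / deriv h z₀).re
      = -α / 2 + ((1 - ‖z₀‖ ^ 2) / (2 * α)) *
          ‖deriv (deriv h) z₀ / deriv h z₀‖ ^ 2) :
    ∃ ζ : ℂ, ‖ζ‖ = 1 ∧
      ∀ z ∈ ball (0:ℂ) 1, deriv h z = (1 - ζ * z) ^ (-(α : ℂ)) := by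
  obtain ⟨hα0, hα3⟩ := hα
  obtain ⟨hdiff, h00, hd0, hne, hre⟩ := hF
  set A := deriv h with hA_def
  set B := deriv A with hB_def
  have hh : AnalyticOnNhd ℂ h (ball 0 1) := hdiff.analyticOnNhd isOpen_ball
  have hA : AnalyticOnNhd ℂ A (ball 0 1) := hh.deriv
  have hB : AnalyticOnNhd ℂ B (ball 0 1) := hA.deriv
  set D : ℂ → ℂ := fun z => (α:ℂ) * A z + z * B z with hD_def
  -- the real part bound
  have hRe : ∀ z ∈ ball (0:ℂ) 1, -(α/2) < (z * B z / A z).re := by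
    intro z hz
    have h1 := hre z hz
    have h2 : (1 + z * B z / A z).re = 1 + (z * B z / A z).re := by simp
    rw [h2] at h1; linarith
  have hDne : ∀ z ∈ ball (0:ℂ) 1, D z ≠ 0 := by
    intro z hz hDz
    have hAz := hne z hz
    have h1 : z * B z / A z = -(α:ℂ) := by
      field_simp
      linear_combination hDz
    have h2 := hRe z hz
    rw [h1] at h2
    simp only [Complex.neg_re, Complex.ofReal_re] at h2
    linarith
  have hDdiff : DifferentiableOn ℂ D (ball 0 1) :=
    ((hA.differentiableOn).const_mul _).add (differentiableOn_id.mul hB.differentiableOn)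
  set ψ : ℂ → ℂ := fun z => B z / D z with hψ_def
  have hψdiff : DifferentiableOn ℂ ψ (ball 0 1) :=
    (hB.differentiableOn).div hDdiff hDne
  -- |z B z| < |D z|
  have habs : ∀ z ∈ ball (0:ℂ) 1, ‖z * B z‖ < ‖D z‖ := by
    intro z hz
    have hAz := hne z hz
    have hRez := hRe z hz
    set t := z * B z / A z with ht_def
    have h1 : z * B z = t * A z := (div_mul_cancel₀ _ hAz).symm
    have h2 : D z = ((α:ℂ) + t) * A z := by
      have hDz : D z = (α:ℂ) * A z + z * B z := rfl
      rw [hDz]; linear_combination h1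
    rw [h1, h2, norm_mul, norm_mul]
    have h3 : ‖t‖ < ‖(α:ℂ) + t‖ := by
      have h4 : ‖t‖ ^ 2 < ‖(α:ℂ) + t‖ ^ 2 := by
        rw [Complex.sq_norm, Complex.sq_norm, Complex.normSq_apply, Complex.normSq_apply]
        simp only [Complex.add_re, Complex.add_im, Complex.ofReal_re, Complex.ofReal_im]
        nlinarith
      exact lt_of_pow_lt_pow_left₀ 2 (norm_nonneg _) h4
    exact mul_lt_mul_of_pos_right h3 (norm_pos_iff.mpr hAz)
  set w : ℂ → ℂ := fun z => z * ψ z with hw_def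
  have hw0 : w 0 = 0 := by simp [hw_def]
  have hwdiff : DifferentiableOn ℂ w (ball 0 1) := differentiableOn_id.mul hψdiff
  have hmaps : Set.MapsTo w (ball 0 1) (ball (w 0) 1) := by
    intro z hz
    rw [hw0, mem_ball_zero_iff]
    have h1 : w z = z * B z / D z := by rw [hw_def, hψ_def]; ring
    rw [h1, norm_div]
    rw [div_lt_one (norm_pos_iff.mpr (hDne z hz))]
    exact habs z hz
  have hwle : ∀ z ∈ ball (0:ℂ) 1, ‖w z‖ ≤ ‖z‖ := by
    intro z hz
    have := Complex.dist_le_div_mul_dist_of_mapsTo_ball hwdiff (hmaps.mono_right ball_subset_closedBall) hz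
    simpa [hw0, Complex.dist_eq] using this
  have hψle' : ∀ z ∈ ball (0:ℂ) 1, z ≠ 0 → ‖ψ z‖ ≤ 1 := by
    intro z hz hz0
    have h1 := hwle z hz
    rw [hw_def] at h1
    simp only [norm_mul] at h1
    have h2 : ‖z‖ * ‖ψ z‖ ≤ ‖z‖ * 1 := by
      simpa using h1
    exact le_of_mul_le_mul_left h2 (norm_pos_iff.mpr hz0)
  have hψle : ∀ z ∈ ball (0:ℂ) 1, ‖ψ z‖ ≤ 1 := by
    intro z hz
    rcases eq_or_ne z 0 with rfl | hz0
    · have hc : ContinuousAt ψ 0 :=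
        ((hψdiff 0 hz).differentiableAt (isOpen_ball.mem_nhds hz)).continuousAt
      have ht : Filter.Tendsto (fun y => ‖ψ y‖) (nhdsWithin (0:ℂ) {(0:ℂ)}ᶜ)
          (nhds (‖ψ 0‖)) :=
        (continuous_norm.continuousAt.comp hc).tendsto.mono_left nhdsWithin_le_nhds
      refine le_of_tendsto ht ?_
      filter_upwards [self_mem_nhdsWithin,
        nhdsWithin_le_nhds (isOpen_ball.mem_nhds hz)] with y hy1 hy2
      exact hψle' y hy2 hy1
    · exact hψle' z hz hz0
  -- equality at z₀
  have hψz₀ : ‖ψ z₀‖ = 1 := by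
    have hAz := hne z₀ hz₀
    have hD := hDne z₀ hz₀
    have hna : Complex.normSq (A z₀) ≠ 0 := by
      simpa [Complex.normSq_eq_zero] using hAz
    have key : Complex.normSq (B z₀) = Complex.normSq (D z₀) := by
      rw [Complex.div_re, Complex.sq_norm, Complex.sq_norm, map_div₀] at heq
      rw [hD_def]
      have hαne : (α:ℝ) ≠ 0 := ne_of_gt hα0
      field_simp at heq
      have heq2 : ((z₀.re * (B z₀).re - z₀.im * (B z₀).im) * (A z₀).re +
          (z₀.re * (B z₀).im + z₀.im * (B z₀).re) * (A z₀).im) * (4*α)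
          = -2*α^2*Complex.normSq (A z₀) + 2*(1-Complex.normSq z₀)*Complex.normSq (B z₀) := by
        refine mul_right_cancel₀ hna ?_
        simp only [Complex.mul_re, Complex.mul_im] at heq
        linear_combination (2 * Complex.normSq (A z₀)) * heq
      simp only [Complex.normSq_apply, Complex.add_re, Complex.add_im, Complex.mul_re,
        Complex.mul_im, Complex.ofReal_re, Complex.ofReal_im] at heq2 ⊢
      linear_combination (-1/2 : ℝ) * heq2
    rw [hψ_def, norm_div, div_eq_one_iff_eq (norm_ne_zero_iff.mpr hD)]
    rw [Complex.norm_def, Complex.norm_def, key]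
  -- maximum modulus
  set ζ : ℂ := ψ z₀ with hζ_def
  have hmax : IsMaxOn (norm ∘ ψ) (ball 0 1) z₀ := by
    intro z hz
    simp only [Function.comp, Set.mem_setOf_eq]
    rw [hψz₀]
    exact hψle z hz
  have hconst := Complex.eqOn_of_isPreconnected_of_isMaxOn_norm
    (convex_ball (0:ℂ) 1).isPreconnected isOpen_ball hψdiff hz₀ hmax
  have hBD : ∀ z ∈ ball (0:ℂ) 1, B z = ζ * ((α:ℂ) * A z + z * B z) := by
    intro z hz
    have h1 : ψ z = ζ := hconst hz
    have h2 : D z ≠ 0 := hDne z hz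
    have h3 : B z = ζ * D z := by
      rw [← h1, hψ_def]
      field_simp
    exact h3
  have hζabs : ‖ζ‖ = 1 := hψz₀
  refine ⟨ζ, hζabs, ?_⟩
  -- slit plane facts
  have hslit : ∀ z ∈ ball (0:ℂ) 1, (1 - ζ * z) ∈ Complex.slitPlane := by
    intro z hz
    rw [Complex.mem_slitPlane_iff]
    left
    have h1 : ‖ζ * z‖ < 1 := by
      rw [norm_mul, hζabs, one_mul]
      exact mem_ball_zero_iff.mp hz
    have h2 : (ζ * z).re < 1 := lt_of_le_of_lt (Complex.re_le_norm _) h1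
    simp only [Complex.sub_re, Complex.one_re]
    linarith
  set g : ℂ → ℂ := fun z => A z * (1 - ζ * z) ^ (α:ℂ) with hg_def
  have hg : ∀ z ∈ ball (0:ℂ) 1, HasDerivWithinAt g 0 (ball 0 1) z := by
    intro z hz
    have hb0 : (1 - ζ * z) ≠ 0 := Complex.slitPlane_ne_zero (hslit z hz)
    have hAz : HasDerivAt A (B z) z := ((hA z hz).differentiableAt).hasDerivAt
    have h1 : HasDerivAt (fun y => 1 - ζ * y) (-ζ) z := by
      simpa using ((hasDerivAt_id z).const_mul ζ).const_sub 1
    have h2 := HasDerivAt.cpow_const (c := (α:ℂ)) h1 (hslit z hz)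
    have h3 := hAz.mul h2
    have key : B z * (1 - ζ * z) = (α:ℂ) * ζ * A z := by
      linear_combination hBD z hz
    have e1 : (1 - ζ*z)^(α:ℂ) = (1 - ζ*z)^((α:ℂ)-1) * (1 - ζ*z) := by
      have hadd := Complex.cpow_add ((α:ℂ)-1) 1 hb0
      rw [Complex.cpow_one] at hadd
      rw [← hadd]
      norm_num
    have h4 : B z * (1 - ζ*z)^(α:ℂ) + A z * ((α:ℂ) * (1 - ζ*z)^((α:ℂ)-1) * (-ζ)) = 0 := by
      rw [e1]
      linear_combination ((1 - ζ*z)^((α:ℂ)-1)) * key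
    rw [← h4]
    exact h3.hasDerivWithinAt
  have h0mem : (0:ℂ) ∈ ball (0:ℂ) 1 := by simp
  have hgz : ∀ z ∈ ball (0:ℂ) 1, g z = g 0 := by
    intro z hz
    have := Convex.norm_image_sub_le_of_norm_hasDerivWithin_le (C := 0)
      (f' := fun _ => (0:ℂ)) hg (fun x hx => by simp) (convex_ball (0:ℂ) 1) h0mem hz
    simp only [zero_mul, norm_le_zero_iff, sub_eq_zero] at this
    exact this
  have hg0 : g 0 = 1 := by
    rw [hg_def]
    simp [hd0]
  intro z hz
  have hb0 : (1 - ζ * z) ≠ 0 := Complex.slitPlane_ne_zero (hslit z hz)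
  have h5 : A z * (1 - ζ*z)^(α:ℂ) = 1 := by
    have := hgz z hz
    rw [hg0] at this
    exact this
  rw [Complex.cpow_neg]
  exact eq_inv_of_mul_eq_one_left (by linear_combination h5)
end

section
/- Let α ∈ (0, 3] and let h ∈ F(α). Then h' is subordinate to H_α(z) = (1 − z)^{−α}; that is, there exists an analytic function ω : 𝔻 → 𝔻 with ω(0) = 0 such that h'(z) = (1 − ω(z))^{−α} for all z ∈ 𝔻. -/
open Complex Metric

section Auxiliary

open MeasureTheory

lemma my_exists_primitive {q : ℂ → ℂ} (hq : DifferentiableOn ℂ q (ball 0 1)) :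
    ∃ g : ℂ → ℂ, g 0 = 0 ∧ ∀ z ∈ ball (0:ℂ) 1, HasDerivAt g (q z) z := by
  have hq' : DifferentiableOn ℂ (deriv q) (ball 0 1) :=
    ((hq.analyticOnNhd isOpen_ball).deriv).differentiableOn
  set μ : Measure ℝ := volume.restrict (Set.Ioc (0:ℝ) 1) with hμdef
  haveI : IsFiniteMeasure μ := by
    constructor
    rw [hμdef, Measure.restrict_apply_univ, Real.volume_Ioc]
    exact ENNReal.ofReal_lt_top
  have hmem : ∀ (a : ℝ), a ∈ Set.Icc (0:ℝ) 1 → ∀ (x : ℂ), ‖x‖ < 1 →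
      (a:ℂ) * x ∈ ball (0:ℂ) 1 := by
    intro a ha x hx
    rw [mem_ball_zero_iff, norm_mul, Complex.norm_real, Real.norm_eq_abs,
      _root_.abs_of_nonneg ha.1]
    calc a * ‖x‖ ≤ 1 * ‖x‖ := by
          apply mul_le_mul_of_nonneg_right ha.2 (norm_nonneg x)
      _ < 1 := by rwa [one_mul]
  have hcont : ∀ (x : ℂ), ‖x‖ < 1 → ∀ s ⊆ Set.Icc (0:ℝ) 1,
      ContinuousOn (fun a : ℝ => q ((a:ℂ) * x)) s ∧
      ContinuousOn (fun a : ℝ => deriv q ((a:ℂ) * x)) s := by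
    intro x hx s hs
    have hmap : ∀ a ∈ s, (a:ℂ) * x ∈ ball (0:ℂ) 1 := fun a ha => hmem a (hs ha) x hx
    have hc : ContinuousOn (fun a : ℝ => (a:ℂ) * x) s :=
      (Complex.continuous_ofReal.mul continuous_const).continuousOn
    exact ⟨hq.continuousOn.comp hc hmap, hq'.continuousOn.comp hc hmap⟩
  refine ⟨fun z => ∫ t, z * q ((t:ℂ) * z) ∂μ, by simp, ?_⟩
  intro z₀ hz₀
  have hz : ‖z₀‖ < 1 := mem_ball_zero_iff.1 hz₀
  set r : ℝ := (1 + ‖z₀‖) / 2 with hrdef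
  set ε : ℝ := (1 - ‖z₀‖) / 2 with hεdef
  have hε : 0 < ε := by rw [hεdef]; linarith
  have hr1 : r < 1 := by rw [hrdef]; linarith
  have hr0 : (0:ℝ) ≤ r := by rw [hrdef]; positivity
  have hball : ∀ x ∈ ball z₀ ε, ‖x‖ < r := by
    intro x hx
    have : ‖x - z₀‖ < ε := by rwa [mem_ball, dist_eq_norm] at hx
    calc ‖x‖ = ‖z₀ + (x - z₀)‖ := by ring_nf
      _ ≤ ‖z₀‖ + ‖x - z₀‖ := norm_add_le _ _
      _ < ‖z₀‖ + ε := by linarith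
      _ = r := by rw [hεdef, hrdef]; ring
  have hsub : closedBall (0:ℂ) r ⊆ ball 0 1 := closedBall_subset_ball hr1
  obtain ⟨C₁, hC₁⟩ := (isCompact_closedBall (0:ℂ) r).exists_bound_of_continuousOn
    (hq.continuousOn.mono hsub)
  obtain ⟨C₂, hC₂⟩ := (isCompact_closedBall (0:ℂ) r).exists_bound_of_continuousOn
    (hq'.continuousOn.mono hsub)
  have hC₁0 : 0 ≤ C₁ := le_trans (norm_nonneg _) (hC₁ 0 (mem_closedBall_self hr0))
  have hC₂0 : 0 ≤ C₂ := le_trans (norm_nonneg _) (hC₂ 0 (mem_closedBall_self hr0))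
  have haxmem : ∀ (a : ℝ), a ∈ Set.Icc (0:ℝ) 1 → ∀ x ∈ ball z₀ ε,
      (a:ℂ) * x ∈ closedBall (0:ℂ) r := by
    intro a ha x hx
    rw [mem_closedBall_zero_iff, norm_mul, Complex.norm_real, Real.norm_eq_abs,
      _root_.abs_of_nonneg ha.1]
    calc a * ‖x‖ ≤ 1 * ‖x‖ := mul_le_mul_of_nonneg_right ha.2 (norm_nonneg x)
      _ ≤ r := by rw [one_mul]; exact (hball x hx).le
  set F' : ℂ → ℝ → ℂ := fun x a => q ((a:ℂ)*x) + x * (deriv q ((a:ℂ)*x) * (a:ℂ)) with hF'def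
  have key := hasDerivAt_integral_of_dominated_loc_of_deriv_le (μ := μ)
    (F := fun (x : ℂ) (a : ℝ) => x * q ((a:ℂ) * x)) (F' := F')
    (x₀ := z₀) (bound := fun _ => C₁ + C₂) (ball_mem_nhds z₀ hε) ?_ ?_ ?_ ?_ ?_ ?_
  · -- conclude
    obtain ⟨-, hkey⟩ := key
    have heq : (∫ a, F' z₀ a ∂μ) = q z₀ := by
      have h1 : (∫ a, F' z₀ a ∂μ) = ∫ a in (0:ℝ)..1, F' z₀ a := by
        rw [intervalIntegral.integral_of_le zero_le_one]
      rw [h1]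
      have hderiv : ∀ t ∈ Set.uIcc (0:ℝ) 1,
          HasDerivAt (fun a : ℝ => (a:ℂ) * q ((a:ℂ) * z₀)) (F' z₀ t) t := by
        intro t ht
        rw [Set.uIcc_of_le zero_le_one] at ht
        have htz : (t:ℂ) * z₀ ∈ ball (0:ℂ) 1 := hmem t ht z₀ hz
        have h1 : HasDerivAt (fun w : ℂ => w * z₀) z₀ (t:ℂ) := by
          simpa using (hasDerivAt_id (t:ℂ)).mul_const z₀
        have h2 : HasDerivAt q (deriv q ((t:ℂ) * z₀)) ((t:ℂ) * z₀) :=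
          (hq.differentiableAt (isOpen_ball.mem_nhds htz)).hasDerivAt
        have h3 : HasDerivAt (fun w : ℂ => q (w * z₀)) (deriv q ((t:ℂ)*z₀) * z₀) (t:ℂ) :=
          h2.comp (t:ℂ) h1
        have h4 : HasDerivAt (fun w : ℂ => w * q (w * z₀))
            (1 * q ((t:ℂ)*z₀) + (t:ℂ) * (deriv q ((t:ℂ)*z₀) * z₀)) (t:ℂ) :=
          (hasDerivAt_id (t:ℂ)).mul h3
        have h5 := h4.comp_ofReal
        convert h5 using 1
        rw [hF'def]; ring
      have hci : IntervalIntegrable (fun a => F' z₀ a) volume 0 1 := by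
        apply ContinuousOn.intervalIntegrable
        rw [Set.uIcc_of_le zero_le_one]
        obtain ⟨hc1, hc2⟩ := hcont z₀ hz (Set.Icc 0 1) subset_rfl
        rw [hF'def]
        exact hc1.add (continuousOn_const.mul (hc2.mul (Complex.continuous_ofReal.continuousOn)))
      have := intervalIntegral.integral_eq_sub_of_hasDerivAt hderiv hci
      rw [this]
      simp
    rwa [heq] at hkey
  · -- hF_meas
    filter_upwards [isOpen_ball.mem_nhds (mem_ball_self hε)] with x hx
    refine ContinuousOn.aestronglyMeasurable ?_ measurableSet_Ioc
    exact continuousOn_const.mul ((hcont x (lt_trans (hball x hx) hr1) _ Set.Ioc_subset_Icc_self).1)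
  · -- hF_int
    refine (integrable_const (C₁ : ℝ)).mono' ?_ ?_
    · refine ContinuousOn.aestronglyMeasurable ?_ measurableSet_Ioc
      exact continuousOn_const.mul ((hcont z₀ hz _ Set.Ioc_subset_Icc_self).1)
    · filter_upwards [ae_restrict_mem measurableSet_Ioc] with a ha
      rw [norm_mul]
      calc ‖z₀‖ * ‖q ((a:ℂ) * z₀)‖ ≤ 1 * C₁ := by
            apply mul_le_mul hz.le _ (norm_nonneg _) zero_le_one
            apply hC₁
            rw [mem_closedBall_zero_iff, norm_mul, Complex.norm_real, Real.norm_eq_abs,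
              _root_.abs_of_nonneg ha.1.le]
            calc a * ‖z₀‖ ≤ 1 * ‖z₀‖ := mul_le_mul_of_nonneg_right ha.2 (norm_nonneg _)
              _ ≤ r := by rw [one_mul, hrdef]; linarith
        _ = C₁ := one_mul _
  · -- hF'_meas
    refine ContinuousOn.aestronglyMeasurable ?_ measurableSet_Ioc
    obtain ⟨hc1, hc2⟩ := hcont z₀ hz _ Set.Ioc_subset_Icc_self
    rw [hF'def]
    exact hc1.add (continuousOn_const.mul (hc2.mul (Complex.continuous_ofReal.continuousOn)))
  · -- h_bound
    filter_upwards [ae_restrict_mem measurableSet_Ioc] with a ha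
    intro x hx
    have hax : (a:ℂ) * x ∈ closedBall (0:ℂ) r := haxmem a (Set.Ioc_subset_Icc_self ha) x hx
    rw [hF'def]
    calc ‖q ((a:ℂ)*x) + x * (deriv q ((a:ℂ)*x) * (a:ℂ))‖
        ≤ ‖q ((a:ℂ)*x)‖ + ‖x * (deriv q ((a:ℂ)*x) * (a:ℂ))‖ := norm_add_le _ _
      _ ≤ C₁ + C₂ := by
          gcongr
          · exact hC₁ _ hax
          · rw [norm_mul, norm_mul, Complex.norm_real, Real.norm_eq_abs,
              _root_.abs_of_nonneg ha.1.le]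
            calc ‖x‖ * (‖deriv q ((a:ℂ)*x)‖ * a) ≤ 1 * (C₂ * 1) := by
                  apply mul_le_mul (lt_trans (hball x hx) hr1).le _ (mul_nonneg (norm_nonneg _) ha.1.le) zero_le_one
                  exact mul_le_mul (hC₂ _ hax) ha.2 ha.1.le hC₂0
              _ = C₂ := by ring
  · -- bound_integrable
    exact integrable_const _
  · -- h_diff
    filter_upwards [ae_restrict_mem measurableSet_Ioc] with a ha
    intro x hx
    have hax : (a:ℂ) * x ∈ ball (0:ℂ) 1 :=
      hmem a (Set.Ioc_subset_Icc_self ha) x (lt_trans (hball x hx) hr1)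
    have h1 : HasDerivAt (fun y : ℂ => (a:ℂ) * y) (a:ℂ) x := by
      simpa using (hasDerivAt_id x).const_mul (a:ℂ)
    have h2 : HasDerivAt q (deriv q ((a:ℂ)*x)) ((a:ℂ)*x) :=
      (hq.differentiableAt (isOpen_ball.mem_nhds hax)).hasDerivAt
    have h3 := h2.comp x h1
    have h4 : HasDerivAt (fun y : ℂ => y * q ((a:ℂ)*y))
        (1 * q ((a:ℂ)*x) + x * (deriv q ((a:ℂ)*x) * (a:ℂ))) x :=
      (hasDerivAt_id x).mul h3
    simpa [hF'def] using h4

lemma my_exists_log {f : ℂ → ℂ} (hf : DifferentiableOn ℂ f (ball 0 1)) (h0 : f 0 = 1)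
    (hne : ∀ z ∈ ball (0:ℂ) 1, f z ≠ 0) :
    ∃ g : ℂ → ℂ, g 0 = 0 ∧ (∀ z ∈ ball (0:ℂ) 1, HasDerivAt g (deriv f z / f z) z) ∧
      ∀ z ∈ ball (0:ℂ) 1, f z = Complex.exp (g z) := by
  have hf' : DifferentiableOn ℂ (deriv f) (ball 0 1) :=
    ((hf.analyticOnNhd isOpen_ball).deriv).differentiableOn
  obtain ⟨g, hg0, hg⟩ := my_exists_primitive (hf'.div hf hne)
  refine ⟨g, hg0, hg, ?_⟩
  have hgd : DifferentiableOn ℂ g (ball 0 1) := fun z hz =>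
    ((hg z hz).differentiableAt).differentiableWithinAt
  set φ : ℂ → ℂ := fun z => f z * Complex.exp (-(g z)) with hφdef
  have hφd : DifferentiableOn ℂ φ (ball 0 1) := hf.mul ((hgd.neg).cexp)
  have hφz : ∀ z ∈ ball (0:ℂ) 1, fderivWithin ℂ φ (ball 0 1) z = 0 := by
    intro z hz
    have h1 : HasDerivAt (fun w => Complex.exp (-(g w)))
        (Complex.exp (-(g z)) * -(deriv f z / f z)) z := by
      have := (hg z hz).neg
      exact (Complex.hasDerivAt_exp (-(g z))).comp z this
    have h2 : HasDerivAt φ (deriv f z * Complex.exp (-(g z)) +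
        f z * (Complex.exp (-(g z)) * -(deriv f z / f z))) z :=
      ((hf.differentiableAt (isOpen_ball.mem_nhds hz)).hasDerivAt).mul h1
    have h3 : HasDerivAt φ 0 z := by
      convert h2 using 1
      rw [mul_comm (f z), mul_assoc, neg_mul, mul_neg, div_mul_eq_mul_div,
        mul_div_assoc, div_self (hne z hz), mul_one, mul_comm (deriv f z), add_neg_cancel]
    rw [fderivWithin_of_isOpen isOpen_ball hz]
    have := h3.hasFDerivAt.fderiv
    rw [this]
    exact ContinuousLinearMap.ext fun w => by simp
  intro z hz
  have hconst : φ z = φ 0 :=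
    (convex_ball (0:ℂ) 1).is_const_of_fderivWithin_eq_zero hφd hφz hz
      (mem_ball_self one_pos)
  have hφ0 : φ 0 = 1 := by rw [hφdef]; simp [h0, hg0]
  rw [hφ0] at hconst
  rw [hφdef] at hconst
  simp only [Complex.exp_neg] at hconst
  exact (mul_inv_eq_one₀ (Complex.exp_ne_zero _)).mp hconst

lemma my_hasDerivAt_normSq {ζ : ℝ → ℂ} {d : ℂ} {t : ℝ} (hζ : HasDerivAt ζ d t) :
    HasDerivAt (fun s => Complex.normSq (ζ s)) (2 * ((starRingEnd ℂ) (ζ t) * d).re) t := by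
  have hre : HasDerivAt (fun s => (ζ s).re) d.re t := by
    have := Complex.reCLM.hasFDerivAt.comp_hasDerivAt t hζ
    simpa [Function.comp_def] using this
  have him : HasDerivAt (fun s => (ζ s).im) d.im t := by
    have := Complex.imCLM.hasFDerivAt.comp_hasDerivAt t hζ
    simpa [Function.comp_def] using this
  have h : HasDerivAt (fun s => (ζ s).re * (ζ s).re + (ζ s).im * (ζ s).im) _ t :=
    (hre.mul hre).add (him.mul him)
  have heq : (fun s => (ζ s).re * (ζ s).re + (ζ s).im * (ζ s).im)
      = fun s => Complex.normSq (ζ s) := by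
    funext s; rw [Complex.normSq_apply]
  rw [heq] at h
  convert h using 1
  simp [Complex.mul_re]
  ring

set_option maxHeartbeats 1000000 in
lemma my_jack {ω : ℂ → ℂ} (hd : DifferentiableOn ℂ ω (ball 0 1)) (h0 : ω 0 = 0)
    (hhyp : ∀ z ∈ ball (0:ℂ) 1, ω z ≠ 1 ∧ -(1/2 : ℝ) < (z * deriv ω z / (1 - ω z)).re) :
    ∀ z ∈ ball (0:ℂ) 1, ‖ω z‖ < 1 := by
  by_contra hcon
  push_neg at hcon
  obtain ⟨z₁, hz₁, hz₁ω⟩ := hcon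
  have hρ : ‖z₁‖ < 1 := mem_ball_zero_iff.1 hz₁
  set K := closedBall (0:ℂ) ‖z₁‖ ∩ {z : ℂ | (1:ℝ) ≤ ‖ω z‖} with hKdef
  have hcb : closedBall (0:ℂ) ‖z₁‖ ⊆ ball 0 1 := closedBall_subset_ball hρ
  have hKclosed : IsClosed K := by
    apply ContinuousOn.preimage_isClosed_of_isClosed
      ((hd.continuousOn.mono hcb).norm) Metric.isClosed_closedBall isClosed_Ici
  have hKc : IsCompact K :=
    (isCompact_closedBall (0:ℂ) ‖z₁‖).of_isClosed_subset hKclosed Set.inter_subset_left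
  have hKne : K.Nonempty := ⟨z₁, mem_closedBall_zero_iff.2 le_rfl, hz₁ω⟩
  obtain ⟨z₀, hz₀K, hz₀min⟩ := hKc.exists_isMinOn hKne continuous_norm.continuousOn
  set r : ℝ := ‖z₀‖ with hrdef
  have hrρ : r ≤ ‖z₁‖ := mem_closedBall_zero_iff.1 hz₀K.1
  have hr1 : r < 1 := lt_of_le_of_lt hrρ hρ
  have hz₀b : z₀ ∈ ball (0:ℂ) 1 := mem_ball_zero_iff.2 hr1
  have hrpos : 0 < r := by
    rcases eq_or_lt_of_le (norm_nonneg z₀) with h | h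
    · exfalso
      have hz00 : z₀ = 0 := norm_eq_zero.1 h.symm
      have h2 := hz₀K.2
      rw [hz00] at h2
      simp only [Set.mem_setOf_eq, h0, norm_zero] at h2
      linarith
    · exact h
  have hsmall : ∀ z : ℂ, ‖z‖ < r → ‖ω z‖ < 1 := by
    intro z hz
    by_contra hge
    push_neg at hge
    have hzK : z ∈ K := ⟨mem_closedBall_zero_iff.2 (le_trans hz.le hrρ), hge⟩
    exact absurd (hz₀min hzK) (not_le.2 hz)
  have hmaps : Set.MapsTo ω (ball 0 r) (ball (ω 0) 1) := by
    rw [h0]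
    intro z hz
    exact mem_ball_zero_iff.2 (hsmall z (mem_ball_zero_iff.1 hz))
  have hdr : DifferentiableOn ℂ ω (ball 0 r) := hd.mono (ball_subset_ball hr1.le)
  have schwarz : ∀ z ∈ ball (0:ℂ) r, ‖ω z‖ ≤ ‖z‖ / r := by
    intro z hz
    have := Complex.dist_le_div_mul_dist_of_mapsTo_ball hdr (hmaps.mono_right ball_subset_closedBall) hz
    rw [h0, dist_zero_right, dist_zero_right] at this
    calc ‖ω z‖ ≤ 1 / r * ‖z‖ := this
      _ = ‖z‖ / r := by ring
  have hle1 : ∀ z : ℂ, ‖z‖ ≤ r → ‖ω z‖ ≤ 1 := by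
    intro z hz
    have hzb : z ∈ ball (0:ℂ) 1 := mem_ball_zero_iff.2 (lt_of_le_of_lt hz hr1)
    have hcont : ContinuousAt (fun t : ℝ => ‖ω ((t:ℂ) * z)‖) 1 := by
      apply ContinuousAt.norm
      apply ContinuousAt.comp
      · have : ((1:ℝ):ℂ) * z = z := by simp
        rw [this]
        exact (hd.differentiableAt (isOpen_ball.mem_nhds hzb)).continuousAt
      · exact (Complex.continuous_ofReal.mul continuous_const).continuousAt
    have htend : Filter.Tendsto (fun t : ℝ => ‖ω ((t:ℂ) * z)‖) (nhdsWithin 1 (Set.Iio 1))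
        (nhds ‖ω z‖) := by
      have h := hcont.tendsto.mono_left (nhdsWithin_le_nhds (s := Set.Iio (1:ℝ)))
      simpa using h
    refine le_of_tendsto htend ?_
    have hIoo : Set.Ioo (0:ℝ) 1 ∈ nhdsWithin (1:ℝ) (Set.Iio 1) :=
      Ioo_mem_nhdsLT_of_mem (by norm_num : (1:ℝ) ∈ Set.Ioc 0 1)
    filter_upwards [hIoo] with t ht
    have htz : ‖(t:ℂ) * z‖ = t * ‖z‖ := by
      rw [norm_mul, Complex.norm_real, Real.norm_eq_abs, _root_.abs_of_nonneg ht.1.le]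
    rcases lt_or_ge (t * ‖z‖) r with hlt | hge
    · have := schwarz ((t:ℂ)*z) (mem_ball_zero_iff.2 (by rwa [htz]))
      rw [htz] at this
      have ht0 : (0:ℝ) ≤ t := ht.1.le
      calc ‖ω ((t:ℂ)*z)‖ ≤ t * ‖z‖ / r := this
        _ ≤ t * r / r := by gcongr
        _ = t := by field_simp
        _ ≤ 1 := ht.2.le
    · exfalso
      have ht0 : (0:ℝ) ≤ t := ht.1.le
      have hh : t * ‖z‖ ≤ t * r := by gcongr
      have h2 : t * r < r := by nlinarith [mul_pos (sub_pos.2 ht.2) hrpos]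
      linarith
  have hω₀1 : ‖ω z₀‖ = 1 := le_antisymm (hle1 z₀ le_rfl) hz₀K.2
  -- derivative setup
  have hdz₀ : HasDerivAt ω (deriv ω z₀) z₀ :=
    (hd.differentiableAt (isOpen_ball.mem_nhds hz₀b)).hasDerivAt
  set w₀ : ℂ := ω z₀ with hw₀def
  set lam : ℂ := (starRingEnd ℂ) w₀ * (z₀ * deriv ω z₀) with hlamdef
  have hnsq : Complex.normSq w₀ = 1 := by
    rw [← Complex.sq_norm]
    rw [hω₀1]
    norm_num
  -- radial part : 1 ≤ lam.re
  have hradial : 1 ≤ lam.re := by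
    have h1 : HasDerivAt (fun w : ℂ => w * z₀) z₀ ((1:ℝ):ℂ) := by
      simpa using (hasDerivAt_id (((1:ℝ):ℂ))).mul_const z₀
    have hdz₀' : HasDerivAt ω (deriv ω z₀) (((1:ℝ):ℂ) * z₀) := by
      rwa [show (((1:ℝ):ℂ) * z₀) = z₀ by simp]
    have h2 : HasDerivAt (fun w : ℂ => ω (w * z₀)) (deriv ω z₀ * z₀) ((1:ℝ):ℂ) :=
      HasDerivAt.comp ((1:ℝ):ℂ) hdz₀' h1
    have hζ : HasDerivAt (fun t : ℝ => ω ((t:ℂ) * z₀)) (deriv ω z₀ * z₀) 1 :=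
      h2.comp_ofReal
    have hF := my_hasDerivAt_normSq hζ
    set D : ℝ := 2 * ((starRingEnd ℂ) (ω (((1:ℝ):ℂ) * z₀)) * (deriv ω z₀ * z₀)).re with hDdef
    have hslope : Filter.Tendsto (slope (fun t : ℝ => Complex.normSq (ω ((t:ℂ) * z₀))) 1)
        (nhdsWithin 1 (Set.Iio 1)) (nhds D) := by
      have := hasDerivAt_iff_tendsto_slope.1 hF
      exact this.mono_left (nhdsWithin_mono _ (fun t ht => ne_of_lt ht))
    have h2t : Filter.Tendsto (fun t : ℝ => 1 + t) (nhdsWithin 1 (Set.Iio 1)) (nhds 2) := by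
      have h : Filter.Tendsto (fun t : ℝ => 1 + t) (nhds (1:ℝ)) (nhds (1 + 1)) :=
        (continuous_const.add continuous_id).tendsto (1:ℝ)
      have h' := h.mono_left (nhdsWithin_le_nhds (s := Set.Iio (1:ℝ)))
      norm_num at h'
      exact h'
    have hDge : 2 ≤ D := by
      refine le_of_tendsto_of_tendsto h2t hslope ?_
      have hIoo : Set.Ioo (0:ℝ) 1 ∈ nhdsWithin (1:ℝ) (Set.Iio 1) :=
        Ioo_mem_nhdsLT_of_mem (by norm_num : (1:ℝ) ∈ Set.Ioc 0 1)
      filter_upwards [hIoo] with t ht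
      have ht0 : (0:ℝ) ≤ t := ht.1.le
      have hF_le : Complex.normSq (ω ((t:ℂ) * z₀)) ≤ t^2 := by
        have htz : ‖(t:ℂ) * z₀‖ = t * r := by
          rw [norm_mul, Complex.norm_real, Real.norm_eq_abs, _root_.abs_of_nonneg ht0, hrdef]
        have hlt : t * r < r := by nlinarith [mul_pos (sub_pos.2 ht.2) hrpos]
        have hs := schwarz ((t:ℂ) * z₀) (mem_ball_zero_iff.2 (by rw [htz]; exact hlt))
        rw [htz] at hs
        have h2 : ‖ω ((t:ℂ) * z₀)‖ ≤ t := by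
          calc ‖ω ((t:ℂ) * z₀)‖ ≤ t * r / r := hs
            _ = t := by field_simp
        calc Complex.normSq (ω ((t:ℂ) * z₀)) = ‖ω ((t:ℂ) * z₀)‖^2 := by
              rw [Complex.normSq_eq_norm_sq]
          _ ≤ t^2 := by exact pow_le_pow_left₀ (norm_nonneg _) h2 2
      have hF1 : Complex.normSq (ω (((1:ℝ):ℂ) * z₀)) = 1 := by
        rw [show (((1:ℝ):ℂ) * z₀) = z₀ by simp]
        exact hnsq
      rw [slope_def_field, hF1]
      rw [le_div_iff_of_neg (by linarith [ht.2] : t - (1:ℝ) < 0)]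
      nlinarith [hF_le]
    -- identify D with 2 * lam.re
    have hDlam : D = 2 * lam.re := by
      rw [hDdef, hlamdef]
      congr 2
      rw [show (((1:ℝ):ℂ) * z₀) = z₀ by simp, ← hw₀def]
      ring
    have := hDlam ▸ hDge
    linarith
  -- tangential part : lam.im = 0
  have htangential : lam.im = 0 := by
    have e1 : HasDerivAt (fun w : ℂ => w * I) I ((0:ℝ):ℂ) := by
      simpa using (hasDerivAt_id (((0:ℝ):ℂ))).mul_const I
    have e2 : HasDerivAt Complex.exp (Complex.exp (((0:ℝ):ℂ) * I)) (((0:ℝ):ℂ) * I) :=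
      Complex.hasDerivAt_exp _
    have e3 : HasDerivAt (fun w : ℂ => Complex.exp (w * I))
        (Complex.exp (((0:ℝ):ℂ) * I) * I) ((0:ℝ):ℂ) := HasDerivAt.comp (((0:ℝ):ℂ)) e2 e1
    have e4 : HasDerivAt (fun w : ℂ => Complex.exp (w * I) * z₀)
        (Complex.exp (((0:ℝ):ℂ) * I) * I * z₀) ((0:ℝ):ℂ) := e3.mul_const z₀
    have hpt : Complex.exp (((0:ℝ):ℂ) * I) * z₀ = z₀ := by
      simp
    have e5 : HasDerivAt ω (deriv ω z₀) (Complex.exp (((0:ℝ):ℂ) * I) * z₀) := by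
      rwa [hpt]
    have e6 : HasDerivAt (fun w : ℂ => ω (Complex.exp (w * I) * z₀))
        (deriv ω z₀ * (Complex.exp (((0:ℝ):ℂ) * I) * I * z₀)) ((0:ℝ):ℂ) :=
      HasDerivAt.comp (((0:ℝ):ℂ)) e5 e4
    have e7 : HasDerivAt (fun θ : ℝ => ω (Complex.exp ((θ:ℂ) * I) * z₀))
        (deriv ω z₀ * (Complex.exp (((0:ℝ):ℂ) * I) * I * z₀)) 0 := e6.comp_ofReal
    have hG := my_hasDerivAt_normSq e7
    have hmax : IsLocalMax (fun θ : ℝ => Complex.normSq (ω (Complex.exp ((θ:ℂ) * I) * z₀))) 0 := by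
      apply Filter.Eventually.of_forall
      intro θ
      have habs : ‖Complex.exp ((θ:ℂ) * I) * z₀‖ = r := by
        rw [norm_mul, Complex.norm_exp_ofReal_mul_I, one_mul, hrdef]
      have h2 : ‖ω (Complex.exp ((θ:ℂ) * I) * z₀)‖ ≤ 1 := hle1 _ (le_of_eq habs)
      have h3 : Complex.normSq (ω (Complex.exp ((θ:ℂ) * I) * z₀)) ≤ 1 := by
        rw [Complex.normSq_eq_norm_sq]
        nlinarith [norm_nonneg (ω (Complex.exp ((θ:ℂ) * I) * z₀))]
      have h4 : Complex.normSq (ω (Complex.exp (((0:ℝ):ℂ) * I) * z₀)) = 1 := by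
        rw [hpt, ← hw₀def]; exact hnsq
      calc Complex.normSq (ω (Complex.exp ((θ:ℂ) * I) * z₀)) ≤ 1 := h3
        _ = Complex.normSq (ω (Complex.exp (((0:ℝ):ℂ) * I) * z₀)) := h4.symm
    have hzero := hmax.hasDerivAt_eq_zero hG
    -- 2 * (conj w₀ * (deriv ω z₀ * (1 * I * z₀))).re = 0
    rw [hpt, ← hw₀def] at hzero
    have hsimp : ((starRingEnd ℂ) w₀ * (deriv ω z₀ * (Complex.exp (((0:ℝ):ℂ) * I) * I * z₀)))
        = I * lam := by
      rw [show Complex.exp (((0:ℝ):ℂ) * I) = 1 by simp, hlamdef]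
      ring
    rw [hsimp] at hzero
    have : (I * lam).re = 0 := by linarith
    simpa [Complex.mul_re] using this
  -- final contradiction
  obtain ⟨hne1, hre⟩ := hhyp z₀ hz₀b
  have hlamre : lam = ((lam.re : ℝ) : ℂ) := by
    apply Complex.ext
    · simp
    · simp [htangential]
  have hconjw : (starRingEnd ℂ) w₀ * w₀ = 1 := by
    rw [mul_comm, Complex.mul_conj, hnsq, Complex.ofReal_one]
  have hA : z₀ * deriv ω z₀ = ((lam.re : ℝ) : ℂ) * w₀ := by
    calc z₀ * deriv ω z₀ = ((starRingEnd ℂ) w₀ * w₀) * (z₀ * deriv ω z₀) := by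
          rw [hconjw, one_mul]
      _ = w₀ * lam := by rw [hlamdef]; ring
      _ = ((lam.re : ℝ) : ℂ) * w₀ := by rw [← hlamre]; ring
  have hw₀ne : (1:ℂ) - w₀ ≠ 0 := by
    intro hcontra
    apply hne1
    rw [← hw₀def]
    have : w₀ = 1 := by linear_combination -hcontra
    exact this
  have hhalf : (w₀ / (1 - w₀)).re = -(1/2) := by
    have hnsq' : w₀.re * w₀.re + w₀.im * w₀.im = 1 := by
      have := hnsq
      rwa [Complex.normSq_apply] at this
    have hw₀relt : w₀.re < 1 := by
      have hle' : w₀.re ≤ 1 := by nlinarith [sq_nonneg w₀.im, sq_nonneg (w₀.re - 1)]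
      rcases lt_or_eq_of_le hle' with h | h
      · exact h
      · exfalso
        have him0 : w₀.im = 0 := by nlinarith
        apply hw₀ne
        have hw1 : w₀ = 1 := Complex.ext (by simp [← h]) (by simp [him0])
        rw [hw1]; ring
    have hden : Complex.normSq (1 - w₀) = 2 * (1 - w₀.re) := by
      rw [Complex.normSq_apply]
      simp only [Complex.sub_re, Complex.sub_im, Complex.one_re, Complex.one_im]
      nlinarith [hnsq']
    rw [Complex.div_re, hden]
    simp only [Complex.sub_re, Complex.sub_im, Complex.one_re, Complex.one_im]
    rw [← add_div]
    have hdenne : 2 * (1 - w₀.re) ≠ 0 := by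
      intro hc
      apply absurd hw₀relt
      simp only [not_lt]
      nlinarith
    field_simp [sub_ne_zero.2 hw₀relt.ne']
    nlinarith [hnsq']
  have hfinal : (z₀ * deriv ω z₀ / (1 - ω z₀)).re = lam.re * (-(1/2)) := by
    rw [← hw₀def, hA, mul_div_assoc]
    rw [show (((lam.re:ℝ):ℂ) * (w₀ / (1 - w₀))).re = lam.re * (w₀ / (1-w₀)).re by
      rw [Complex.mul_re]; simp]
    rw [hhalf]
  rw [hfinal] at hre
  nlinarith [hradial]

end Auxiliary

theorem stmt4 (α : ℝ) (hα : α ∈ Set.Ioc (0:ℝ) 3) (h : ℂ → ℂ) (hF : MemF α h) :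
    ∃ ω : ℂ → ℂ, DifferentiableOn ℂ ω (ball 0 1) ∧ ω 0 = 0 ∧
      (∀ z ∈ ball (0:ℂ) 1, ω z ∈ ball (0:ℂ) 1) ∧
      (∀ z ∈ ball (0:ℂ) 1, deriv h z = (1 - ω z) ^ (-(α : ℂ))) := by
  obtain ⟨hd, -, hd1, hne, hRe⟩ := hF
  have hα0 : (0:ℝ) < α := hα.1
  have hαne : (α:ℂ) ≠ 0 := Complex.ofReal_ne_zero.2 (ne_of_gt hα0)
  set f : ℂ → ℂ := deriv h with hfdef
  have hf : DifferentiableOn ℂ f (ball 0 1) :=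
    ((hd.analyticOnNhd isOpen_ball).deriv).differentiableOn
  obtain ⟨g, hg0, hg, hfg⟩ := my_exists_log hf hd1 hne
  set v : ℂ → ℂ := fun z => -(g z) / (α:ℂ) with hvdef
  set ω : ℂ → ℂ := fun z => 1 - Complex.exp (v z) with hωdef
  have hvD : ∀ z ∈ ball (0:ℂ) 1, HasDerivAt v (-(deriv f z / f z) / (α:ℂ)) z := by
    intro z hz
    exact ((hg z hz).neg).div_const (α:ℂ)
  have hωD : ∀ z ∈ ball (0:ℂ) 1,
      HasDerivAt ω (-(Complex.exp (v z) * (-(deriv f z / f z) / (α:ℂ)))) z := by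
    intro z hz
    have hexp : HasDerivAt (fun w => Complex.exp (v w))
        (Complex.exp (v z) * (-(deriv f z / f z) / (α:ℂ))) z :=
      (Complex.hasDerivAt_exp (v z)).comp z (hvD z hz)
    have := (hasDerivAt_const z (1:ℂ)).sub hexp
    rw [zero_sub] at this
    exact this
  have hωdiff : DifferentiableOn ℂ ω (ball 0 1) := fun z hz =>
    ((hωD z hz).differentiableAt).differentiableWithinAt
  have hω0 : ω 0 = 0 := by
    rw [hωdef]
    simp only [hvdef, hg0]
    simp
  have hωhyp : ∀ z ∈ ball (0:ℂ) 1, ω z ≠ 1 ∧ -(1/2 : ℝ) < (z * deriv ω z / (1 - ω z)).re := by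
    intro z hz
    have h1ω : (1:ℂ) - ω z = Complex.exp (v z) := by rw [hωdef]; ring
    constructor
    · intro hcontra
      have : (1:ℂ) - ω z = 0 := by rw [hcontra]; ring
      rw [h1ω] at this
      exact Complex.exp_ne_zero _ this
    · have hderiv : deriv ω z = -(Complex.exp (v z) * (-(deriv f z / f z) / (α:ℂ))) :=
        (hωD z hz).deriv
      have heq : z * deriv ω z / (1 - ω z) = z * (deriv f z / f z) / (α:ℂ) := by
        rw [hderiv, h1ω]
        have hexpne := Complex.exp_ne_zero (v z)
        calc z * -(Complex.exp (v z) * (-(deriv f z / f z) / (α:ℂ))) / Complex.exp (v z)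
            = (Complex.exp (v z) / Complex.exp (v z)) * (z * (deriv f z / f z) / (α:ℂ)) := by
              ring
          _ = z * (deriv f z / f z) / (α:ℂ) := by rw [div_self hexpne, one_mul]
      rw [heq]
      have hre := hRe z hz
      have hre2 : -(α/2) < (z * (deriv f z / f z)).re := by
        have : (1 + z * deriv (deriv h) z / deriv h z).re
            = 1 + (z * (deriv f z / f z)).re := by
          rw [Complex.add_re, Complex.one_re, mul_div_assoc]
        rw [this] at hre
        linarith
      rw [Complex.div_ofReal_re]
      rw [lt_div_iff₀ hα0]
      linarith
  have hsmall := my_jack hωdiff hω0 hωhyp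
  have hmaps : ∀ z ∈ ball (0:ℂ) 1, ω z ∈ ball (0:ℂ) 1 := fun z hz =>
    mem_ball_zero_iff.2 (hsmall z hz)
  -- positivity of real part of exp (v z)
  have hpos : ∀ z ∈ ball (0:ℂ) 1, 0 < (Complex.exp (v z)).re := by
    intro z hz
    set w : ℂ := Complex.exp (v z) with hwdef
    have h1 : Complex.normSq (1 - w) < 1 := by
      have := hsmall z hz
      rw [hωdef] at this
      simp only at this
      have h2 : ‖(1:ℂ) - w‖ < 1 := this
      have := Complex.normSq_eq_norm_sq (1 - w)
      nlinarith [norm_nonneg ((1:ℂ) - w)]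
    have hexpand : Complex.normSq (1 - w) = 1 - 2*w.re + Complex.normSq w := by
      rw [Complex.normSq_apply, Complex.normSq_apply]
      simp only [Complex.sub_re, Complex.sub_im, Complex.one_re, Complex.one_im]
      ring
    have hwpos : 0 < Complex.normSq w := Complex.normSq_pos.2 (Complex.exp_ne_zero _)
    nlinarith
  -- connectedness argument : |im (v z)| < π/2
  have himlt : ∀ z ∈ ball (0:ℂ) 1, |(v z).im| < Real.pi/2 := by
    have hvcont : ContinuousOn v (ball (0:ℂ) 1) := fun z hz =>
      ((hvD z hz).differentiableAt).continuousAt.continuousWithinAt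
    set S : Set ℂ := v '' (ball 0 1) with hSdef
    have hS : IsPreconnected S :=
      ((convex_ball (0:ℂ) 1).isPreconnected).image v hvcont
    set U : Set ℂ := Complex.im ⁻¹' (Set.Ioo (-(Real.pi/2)) (Real.pi/2)) with hUdef
    set V : Set ℂ := {w : ℂ | 0 < (Complex.exp w).re} ∩ {w : ℂ | Real.pi/2 < |w.im|}
      with hVdef
    have hUopen : IsOpen U := isOpen_Ioo.preimage Complex.continuous_im
    have hVopen : IsOpen V := by
      apply IsOpen.inter
      · exact isOpen_Ioi.preimage (Complex.continuous_re.comp Complex.continuous_exp)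
      · exact isOpen_Ioi.preimage (_root_.continuous_abs.comp Complex.continuous_im)
    have hdisj : Disjoint U V := by
      rw [Set.disjoint_left]
      intro w hwU hwV
      have h1 : |w.im| < Real.pi/2 := abs_lt.2 ⟨hwU.1, hwU.2⟩
      exact absurd hwV.2 (not_lt.2 h1.le)
    have hcover : S ⊆ U ∪ V := by
      rintro w ⟨z, hz, rfl⟩
      have hwre : 0 < (Complex.exp (v z)).re := hpos z hz
      rcases lt_trichotomy (|(v z).im|) (Real.pi/2) with hlt | heq | hgt
      · left
        exact Set.mem_preimage.2 ⟨neg_lt_of_abs_lt hlt, lt_of_abs_lt hlt⟩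
      · exfalso
        have hcos : Real.cos ((v z).im) = 0 := by
          rcases abs_eq (by positivity : (0:ℝ) ≤ Real.pi/2) |>.1 heq with h | h
          · rw [h]; exact Real.cos_pi_div_two
          · rw [h, Real.cos_neg]; exact Real.cos_pi_div_two
        rw [Complex.exp_re, hcos, mul_zero] at hwre
        exact lt_irrefl 0 hwre
      · right
        exact ⟨hwre, hgt⟩
    have hSU : (S ∩ U).Nonempty := by
      refine ⟨v 0, ⟨0, mem_ball_self one_pos, rfl⟩, ?_⟩
      have : v 0 = 0 := by rw [hvdef]; simp [hg0]
      rw [this]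
      refine Set.mem_preimage.2 (Set.mem_Ioo.2 ⟨?_, ?_⟩) <;>
        simp only [Complex.zero_im] <;> linarith [Real.pi_div_two_pos]
    have hfin : S ⊆ U := hS.subset_left_of_subset_union hUopen hVopen hdisj hcover hSU
    intro z hz
    have : v z ∈ U := hfin ⟨z, hz, rfl⟩
    exact abs_lt.2 ⟨(Set.mem_preimage.1 this).1, (Set.mem_preimage.1 this).2⟩
  refine ⟨ω, hωdiff, hω0, hmaps, ?_⟩
  intro z hz
  have h1ω : (1:ℂ) - ω z = Complex.exp (v z) := by rw [hωdef]; ring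
  rw [h1ω]
  rw [Complex.cpow_def_of_ne_zero (Complex.exp_ne_zero _)]
  have hlog : Complex.log (Complex.exp (v z)) = v z := by
    apply Complex.log_exp
    · have := himlt z hz
      have h2 := abs_lt.1 this
      linarith [Real.pi_pos, h2.1]
    · have := himlt z hz
      have h2 := abs_lt.1 this
      linarith [Real.pi_pos, h2.2]
  rw [hlog]
  have hvα : v z * (-(α:ℂ)) = g z := by
    rw [hvdef]
    field_simp
  rw [hvα]
  exact hfg z hz
end

section
/- Let α ∈ (0, 3], let m ≥ 1, and let f be analytic on 𝔻 with f(0) = 0, f'(0) = 1, f'(z) ≠ 0 on 𝔻, such that f''(z)/f'(z) = α·φ(z)/(1 − z·φ(z)) for all z ∈ 𝔻, where φ is a finite Blaschke product of degree m. Then there exist m + 1 pairwise distinct points ζ₁, …, ζ_{m+1} ∈ 𝕋 and real numbers t₁, …, t_{m+1} with 0 < t_k < 1 and t₁ + ⋯ + t_{m+1} = 1 such that f'(z) = ∏_{k=1}^{m+1} (1 − ζ_k z)^{−α t_k} for all z ∈ 𝔻. -/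
open Complex Metric

/-- `φ` is a finite Blaschke product of degree `m`: a unimodular constant times a product
of `m` Möbius factors `(z - bₖ)/(1 - conj bₖ · z)` with zeros `bₖ` in the unit disk. -/
def IsBlaschke (m : ℕ) (φ : ℂ → ℂ) : Prop :=
  ∃ (l : ℂ) (b : Fin m → ℂ), ‖l‖ = 1 ∧ (∀ k, b k ∈ ball (0:ℂ) 1) ∧
    φ = fun z => l * ∏ k, (z - b k) / (1 - (starRingEnd ℂ) (b k) * z)

open Polynomial

lemma normSq_key (b z : ℂ) :
    normSq (1 - (starRingEnd ℂ) b * z) - normSq (z - b) = (1 - normSq z) * (1 - normSq b) := by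
  simp [normSq_apply, mul_re, mul_im, conj_re, conj_im, sub_re, sub_im, one_re, one_im]
  ring

lemma factor_ne (b z : ℂ) (hb : ‖b‖ < 1) (hz : ‖z‖ ≤ 1) :
    1 - (starRingEnd ℂ) b * z ≠ 0 := by
  intro h
  have : ‖(starRingEnd ℂ) b * z‖ < 1 := by
    rw [norm_mul, Complex.norm_conj]
    calc ‖b‖ * ‖z‖ ≤ ‖b‖ * 1 :=
      mul_le_mul_of_nonneg_left hz (norm_nonneg _)
    _ < 1 := by simpa using hb
  rw [sub_eq_zero] at h
  rw [← h] at this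
  simp at this

lemma abs_factor_le (b z : ℂ) (hb : ‖b‖ < 1) (hz : ‖z‖ ≤ 1) :
    ‖z - b‖ ≤ ‖1 - (starRingEnd ℂ) b * z‖ := by
  have h := normSq_key b z
  have h1 : normSq z ≤ 1 := by rw [normSq_eq_norm_sq]; nlinarith [norm_nonneg z]
  have h2 : normSq b < 1 := by rw [normSq_eq_norm_sq]; nlinarith [norm_nonneg b]
  have : normSq (z - b) ≤ normSq (1 - (starRingEnd ℂ) b * z) := by nlinarith
  have := Real.sqrt_le_sqrt this
  simpa [Complex.norm_def] using this

lemma abs_factor_lt (b z : ℂ) (hb : ‖b‖ < 1) (hz : 1 < ‖z‖) :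
    ‖1 - (starRingEnd ℂ) b * z‖ < ‖z - b‖ := by
  have h := normSq_key b z
  have h1 : 1 < normSq z := by rw [normSq_eq_norm_sq]; nlinarith
  have h2 : normSq b < 1 := by rw [normSq_eq_norm_sq]; nlinarith [norm_nonneg b]
  have : normSq (1 - (starRingEnd ℂ) b * z) < normSq (z - b) := by nlinarith
  have := Real.sqrt_lt_sqrt (normSq_nonneg _) this
  simpa [Complex.norm_def] using this

variable {m : ℕ} (l : ℂ) (b : Fin m → ℂ)

noncomputable def Pb : ℂ[X] := C l * ∏ k, (X - C (b k))
noncomputable def Qb : ℂ[X] := ∏ k : Fin m, (1 - C ((starRingEnd ℂ) (b k)) * X)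
noncomputable def Db : ℂ[X] := Qb b - X * Pb l b

lemma Pb_eval (z : ℂ) : (Pb l b).eval z = l * ∏ k, (z - b k) := by
  simp [Pb, eval_prod]

lemma Qb_eval (z : ℂ) : (Qb b).eval z = ∏ k, (1 - (starRingEnd ℂ) (b k) * z) := by
  simp [Qb, eval_prod]

lemma Db_eval (z : ℂ) : (Db l b).eval z = (Qb b).eval z - z * (Pb l b).eval z := by
  simp [Db]

lemma prod_monic : (∏ k, (X - C (b k)) : ℂ[X]).Monic :=
  monic_prod_of_monic _ _ fun k _ => monic_X_sub_C _

lemma prod_natDegree : (∏ k, (X - C (b k)) : ℂ[X]).natDegree = m := by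
  rw [natDegree_prod]
  · simp
  · intro k _; exact X_sub_C_ne_zero _

lemma Pb_natDegree (hl : l ≠ 0) : (Pb l b).natDegree = m := by
  rw [Pb, natDegree_C_mul hl, prod_natDegree]

lemma Pb_coeff : (Pb l b).coeff m = l := by
  have h : (∏ k, (X - C (b k)) : ℂ[X]).coeff m = 1 := by
    have := (prod_monic b).coeff_natDegree
    rwa [prod_natDegree] at this
  rw [Pb, coeff_C_mul, h, mul_one]

lemma Pb_degree_le : (Pb l b).degree ≤ m := by
  by_cases hl : l = 0
  · simp [Pb, hl]
  calc (Pb l b).degree ≤ (Pb l b).natDegree := degree_le_natDegree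
  _ = m := by rw [Pb_natDegree l b hl]

lemma Qb_degree_le : (Qb b).degree ≤ m := by
  refine (degree_prod_le _ _).trans ?_
  have h : ∀ k : Fin m, (1 - C ((starRingEnd ℂ) (b k)) * X : ℂ[X]).degree ≤ 1 := by
    intro k
    refine (degree_sub_le _ _).trans ?_
    simp only [sup_le_iff]
    refine ⟨by simpa using (degree_one_le : (1:ℂ[X]).degree ≤ 0).trans (by norm_num), ?_⟩
    refine (degree_mul_le _ _).trans ?_
    refine le_trans (add_le_add degree_C_le (le_of_eq degree_X)) ?_
    norm_num
  calc ∑ k : Fin m, (1 - C ((starRingEnd ℂ) (b k)) * X : ℂ[X]).degree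
      ≤ ∑ _k : Fin m, (1 : WithBot ℕ) := Finset.sum_le_sum fun k _ => h k
  _ = m := by
      rw [Finset.sum_const]
      simp [nsmul_eq_mul, mul_one]

lemma Db_coeff (hl : l ≠ 0) : (Db l b).coeff (m + 1) = -l := by
  have hQ : (Qb b).coeff (m + 1) = 0 := by
    apply coeff_eq_zero_of_degree_lt
    exact lt_of_le_of_lt (Qb_degree_le b) (by exact_mod_cast Nat.lt_succ_self m)
  rw [Db, coeff_sub, hQ, coeff_X_mul, Pb_coeff, zero_sub]

lemma Db_degree_le : (Db l b).degree ≤ (m + 1 : ℕ) := by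
  refine (degree_sub_le _ _).trans ?_
  simp only [sup_le_iff]
  constructor
  · exact (Qb_degree_le b).trans (by exact_mod_cast Nat.le_succ m)
  · refine (degree_mul_le _ _).trans ?_
    rw [degree_X]
    refine le_trans (add_le_add le_rfl (Pb_degree_le l b)) ?_
    rw [show ((m + 1 : ℕ) : WithBot ℕ) = 1 + (m : WithBot ℕ) by push_cast; ring]

lemma Db_degree (hl : l ≠ 0) : (Db l b).degree = (m + 1 : ℕ) := by
  refine le_antisymm (Db_degree_le l b) ?_
  refine le_degree_of_ne_zero ?_
  rw [Db_coeff l b hl]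
  simpa using hl

lemma Db_ne_zero (hl : l ≠ 0) : Db l b ≠ 0 := by
  intro h
  have h2 := Db_degree l b hl
  rw [h, degree_zero] at h2
  have : ((m + 1 : ℕ) : WithBot ℕ) ≠ ⊥ := WithBot.natCast_ne_bot _
  exact this h2.symm

lemma Db_natDegree (hl : l ≠ 0) : (Db l b).natDegree = m + 1 :=
  natDegree_eq_of_degree_eq_some (Db_degree l b hl)

lemma Db_leadingCoeff (hl : l ≠ 0) : (Db l b).leadingCoeff = -l := by
  rw [leadingCoeff, Db_natDegree l b hl, Db_coeff l b hl]
section Roots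
variable {m : ℕ} {l : ℂ} {b : Fin m → ℂ}

lemma Qb_eval_ne_zero (hb : ∀ k, ‖b k‖ < 1) {z : ℂ} (hz : ‖z‖ ≤ 1) :
    (Qb b).eval z ≠ 0 := by
  rw [Qb_eval]
  exact Finset.prod_ne_zero_iff.2 fun k _ => factor_ne (b k) z (hb k) hz

lemma abs_zP_lt (hl : ‖l‖ = 1) (hb : ∀ k, ‖b k‖ < 1)
    {z : ℂ} (hz : ‖z‖ < 1) :
    ‖z * (Pb l b).eval z‖ < ‖(Qb b).eval z‖ := by
  rw [Pb_eval, Qb_eval]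
  have hQpos : 0 < ∏ k, ‖1 - (starRingEnd ℂ) (b k) * z‖ :=
    Finset.prod_pos fun k _ => (norm_pos_iff.mpr (factor_ne (b k) z (hb k) hz.le))
  have hle : ∏ k, ‖z - b k‖ ≤ ∏ k, ‖1 - (starRingEnd ℂ) (b k) * z‖ :=
    Finset.prod_le_prod (fun k _ => norm_nonneg _)
      (fun k _ => abs_factor_le (b k) z (hb k) hz.le)
  calc ‖z * (l * ∏ k, (z - b k))‖
      = ‖z‖ * (∏ k, ‖z - b k‖) := by
        simp [map_mul, map_prod, hl]
  _ ≤ ‖z‖ * ∏ k, ‖1 - (starRingEnd ℂ) (b k) * z‖ :=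
      mul_le_mul_of_nonneg_left hle (norm_nonneg _)
  _ < 1 * ∏ k, ‖1 - (starRingEnd ℂ) (b k) * z‖ :=
      (mul_lt_mul_of_pos_right hz hQpos)
  _ = ‖∏ k, (1 - (starRingEnd ℂ) (b k) * z)‖ := by
      rw [one_mul, norm_prod]

lemma Db_eval_ne_zero_ball (hl : ‖l‖ = 1) (hb : ∀ k, ‖b k‖ < 1)
    {z : ℂ} (hz : ‖z‖ < 1) : (Db l b).eval z ≠ 0 := by
  rw [Db_eval]
  intro h
  rw [sub_eq_zero] at h
  have := abs_zP_lt hl hb hz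
  rw [← h] at this
  exact lt_irrefl _ this

lemma root_abs_eq_one (hl : ‖l‖ = 1) (hb : ∀ k, ‖b k‖ < 1)
    {w : ℂ} (hw : (Db l b).IsRoot w) : ‖w‖ = 1 := by
  rcases lt_trichotomy (‖w‖) 1 with h | h | h
  · exact absurd hw (Db_eval_ne_zero_ball hl hb h)
  · exact h
  · exfalso
    have hl0 : l ≠ 0 := by intro h0; rw [h0] at hl; simp at hl
    have heq : (Qb b).eval w = w * (Pb l b).eval w := by
      have := hw
      rw [IsRoot, Db_eval, sub_eq_zero] at this
      exact this
    have hwb : ∀ k, w - b k ≠ 0 := by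
      intro k h0
      have h1 : w = b k := by rwa [sub_eq_zero] at h0
      rw [h1] at h
      exact absurd (hb k) (by linarith)
    have hPpos : 0 < ∏ k, ‖w - b k‖ :=
      Finset.prod_pos fun k _ => norm_pos_iff.mpr (hwb k)
    have hlt : ‖(Qb b).eval w‖ < ‖w * (Pb l b).eval w‖ := by
      rw [Qb_eval, Pb_eval, norm_prod]
      calc ∏ k, ‖1 - (starRingEnd ℂ) (b k) * w‖
          ≤ ∏ k, ‖w - b k‖ :=
            Finset.prod_le_prod (fun k _ => norm_nonneg _)
              (fun k _ => (abs_factor_lt (b k) w (hb k) h).le)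
      _ < ‖w‖ * ∏ k, ‖w - b k‖ := by nlinarith
      _ = ‖w * (l * ∏ k, (w - b k))‖ := by
            simp [map_mul, map_prod, hl]
    rw [heq] at hlt
    exact lt_irrefl _ hlt

lemma Db_roots_card (hl : l ≠ 0) : Multiset.card (Db l b).roots = m + 1 := by
  have hs : (Db l b).Splits := IsAlgClosed.splits _
  rw [splits_iff_card_roots] at hs
  rw [hs, Db_natDegree l b hl]

end Roots

lemma factor_id (b w : ℂ) (hb : ‖b‖ < 1) (hw : ‖w‖ = 1) :
    (starRingEnd ℂ) b * w / (1 - (starRingEnd ℂ) b * w) + w / (w - b)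
      = (((1 - normSq b) / normSq (w - b) : ℝ) : ℂ) := by
  have hw0 : w ≠ 0 := by intro h; rw [h] at hw; simp at hw
  have hww : w * (starRingEnd ℂ) w = 1 := by
    rw [mul_conj]
    rw [normSq_eq_norm_sq, hw]
    norm_num
  have h1 : 1 - (starRingEnd ℂ) b * w ≠ 0 := factor_ne b w hb hw.le
  have h2 : w - b ≠ 0 := by
    intro h0
    have : w = b := by rwa [sub_eq_zero] at h0
    rw [this] at hw; linarith
  have h3 : (normSq (w - b) : ℂ) ≠ 0 := by
    have : normSq (w - b) ≠ 0 := by simpa [normSq_eq_zero] using h2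
    exact_mod_cast this
  have key : (w - b) * (1 - (starRingEnd ℂ) b * w) = w * ((normSq (w - b) : ℝ) : ℂ) := by
    rw [← mul_conj (w - b)]
    simp only [map_sub]
    linear_combination (b - w) * hww
  have hnb : ((normSq b : ℝ) : ℂ) = (starRingEnd ℂ) b * b := by
    rw [← mul_conj b]; ring
  rw [div_add_div _ _ h1 h2]
  push_cast
  rw [div_eq_div_iff (mul_ne_zero h1 h2) h3, hnb]
  linear_combination ((starRingEnd ℂ) b * b - 1) * key

lemma derivative_finset_prod {ι : Type*} [DecidableEq ι] (s : Finset ι) (f : ι → ℂ[X]) :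
    derivative (∏ i ∈ s, f i) = ∑ i ∈ s, (∏ j ∈ s.erase i, f j) * derivative (f i) := by
  rw [Finset.prod_eq_multiset_prod, Polynomial.derivative_prod, Finset.sum_eq_multiset_sum]
  simp only [Finset.prod_eq_multiset_prod, Finset.erase_val]

section DerivId
variable {m : ℕ} {l : ℂ} {b : Fin m → ℂ}

noncomputable def rho (b : Fin m → ℂ) (w : ℂ) : ℝ :=
  1 + ∑ k, (1 - normSq (b k)) / normSq (w - b k)

lemma rho_gt_one (hm : 1 ≤ m) (hb : ∀ k, ‖b k‖ < 1)
    {w : ℂ} (hw : ‖w‖ = 1) : 1 < rho b w := by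
  have hpos : ∀ k : Fin m, 0 < (1 - normSq (b k)) / normSq (w - b k) := by
    intro k
    have h2 : w - b k ≠ 0 := by
      intro h0
      have : w = b k := by rwa [sub_eq_zero] at h0
      rw [this] at hw; linarith [hb k]
    have hn : 0 < normSq (w - b k) := normSq_pos.2 h2
    have hb' : normSq (b k) < 1 := by
      rw [normSq_eq_norm_sq]; nlinarith [norm_nonneg (b k), hb k]
    exact div_pos (by linarith) hn
  have h0 : 0 < ∑ k, (1 - normSq (b k)) / normSq (w - b k) := by
    haveI : NeZero m := ⟨by omega⟩
    exact Finset.sum_pos (fun k _ => hpos k) Finset.univ_nonempty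
  rw [rho]; linarith

lemma deriv_root_eq (hl : ‖l‖ = 1) (hb : ∀ k, ‖b k‖ < 1)
    {w : ℂ} (hroot : (Db l b).IsRoot w) :
    (Db l b).derivative.eval w * w = -(((rho b w : ℝ) : ℂ)) * (Qb b).eval w := by
  have hw : ‖w‖ = 1 := root_abs_eq_one hl hb hroot
  have hw0 : w ≠ 0 := by intro h; rw [h] at hw; simp at hw
  have hfk : ∀ k, 1 - (starRingEnd ℂ) (b k) * w ≠ 0 := fun k => factor_ne (b k) w (hb k) hw.le
  have hwb : ∀ k, w - b k ≠ 0 := by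
    intro k h0
    have : w = b k := by rwa [sub_eq_zero] at h0
    rw [this] at hw; linarith [hb k]
  have hQw : (Qb b).eval w ≠ 0 := Qb_eval_ne_zero hb hw.le
  have heq : (Qb b).eval w = w * (Pb l b).eval w := by
    have h2 := hroot
    rw [IsRoot, Db_eval, sub_eq_zero] at h2
    exact h2
  have hQkey : (Qb b).derivative.eval w
      = (∏ j, (1 - (starRingEnd ℂ) (b j) * w)) * ∑ k, (-(starRingEnd ℂ) (b k)) / (1 - (starRingEnd ℂ) (b k) * w) := by
    rw [Qb, derivative_finset_prod, eval_finset_sum, Finset.mul_sum]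
    refine Finset.sum_congr rfl fun k _ => ?_
    have hder : derivative (1 - C ((starRingEnd ℂ) (b k)) * X : ℂ[X]) = C (-(starRingEnd ℂ) (b k)) := by
      simp [derivative_sub, derivative_one, derivative_mul, derivative_X, derivative_C]
    rw [hder, eval_mul, eval_C, eval_prod]
    simp only [eval_sub, eval_one, eval_mul, eval_C, eval_X]
    rw [← Finset.prod_erase_mul Finset.univ _ (Finset.mem_univ k)]
    field_simp [hfk k, show 1 - w * (starRingEnd ℂ) (b k) ≠ 0 by rw [mul_comm]; exact hfk k]
    simp only [mul_comm w]
    ring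
  have hPkey : eval w (derivative (∏ k, (X - C (b k)) : ℂ[X]))
      = (∏ j, (w - b j)) * ∑ k, 1 / (w - b k) := by
    rw [derivative_finset_prod, eval_finset_sum, Finset.mul_sum]
    refine Finset.sum_congr rfl fun k _ => ?_
    rw [derivative_sub, derivative_X, derivative_C, sub_zero, mul_one, eval_prod]
    simp only [eval_sub, eval_X, eval_C]
    rw [← Finset.prod_erase_mul Finset.univ _ (Finset.mem_univ k)]
    rw [mul_one_div, mul_div_cancel_right₀ _ (hwb k)]
  have hP' : (Pb l b).derivative.eval w = (Pb l b).eval w * ∑ k, 1 / (w - b k) := by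
    rw [Pb, derivative_mul, derivative_C, zero_mul, zero_add, eval_mul, eval_C, hPkey]
    rw [eval_mul, eval_C, eval_prod]
    simp only [eval_sub, eval_X, eval_C]
    ring
  have hQ' : (Qb b).derivative.eval w
      = (Qb b).eval w * ∑ k, (-(starRingEnd ℂ) (b k)) / (1 - (starRingEnd ℂ) (b k) * w) := by
    rw [hQkey, Qb_eval]
  have hsum : ∀ k : Fin m,
      (starRingEnd ℂ) (b k) * w / (1 - (starRingEnd ℂ) (b k) * w) + w / (w - b k)
        = (((1 - normSq (b k)) / normSq (w - b k) : ℝ) : ℂ) :=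
    fun k => factor_id (b k) w (hb k) hw
  have hrho : (((rho b w : ℝ)) : ℂ)
      = 1 + ∑ k, ((starRingEnd ℂ) (b k) * w / (1 - (starRingEnd ℂ) (b k) * w) + w / (w - b k)) := by
    rw [rho]
    push_cast
    congr 1
    refine Finset.sum_congr rfl fun k _ => ?_
    rw [hsum k]
    push_cast
    ring
  have hsplit : ∑ k, ((starRingEnd ℂ) (b k) * w / (1 - (starRingEnd ℂ) (b k) * w) + w / (w - b k))
      = -(w * ∑ k, (-(starRingEnd ℂ) (b k)) / (1 - (starRingEnd ℂ) (b k) * w))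
        + w * ∑ k, 1 / (w - b k) := by
    rw [Finset.mul_sum, Finset.mul_sum, ← Finset.sum_neg_distrib, ← Finset.sum_add_distrib]
    refine Finset.sum_congr rfl fun k _ => ?_
    field_simp
  have hDer : (Db l b).derivative = (Qb b).derivative - ((Pb l b) + X * (Pb l b).derivative) := by
    rw [Db, derivative_sub, derivative_mul, derivative_X, one_mul]
  rw [hDer]
  simp only [eval_sub, eval_add, eval_mul, eval_X]
  rw [hQ', hP', hrho, hsplit, heq]
  ring

section RootsFinset
variable {m : ℕ} {l : ℂ} {b : Fin m → ℂ}

lemma hl0_of (hl : ‖l‖ = 1) : l ≠ 0 := by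
  intro h; rw [h] at hl; simp at hl

lemma deriv_ne_zero_at_root (hm : 1 ≤ m) (hl : ‖l‖ = 1)
    (hb : ∀ k, ‖b k‖ < 1) {w : ℂ} (hroot : (Db l b).IsRoot w) :
    (Db l b).derivative.eval w ≠ 0 := by
  have hw : ‖w‖ = 1 := root_abs_eq_one hl hb hroot
  have hw0 : w ≠ 0 := by intro h; rw [h] at hw; simp at hw
  have hQw : (Qb b).eval w ≠ 0 := Qb_eval_ne_zero hb hw.le
  have hrho : (0:ℝ) < rho b w := lt_trans one_pos (rho_gt_one hm hb hw)
  have hkey := deriv_root_eq hl hb hroot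
  intro h
  rw [h, zero_mul] at hkey
  have : -(((rho b w : ℝ)) : ℂ) ≠ 0 := by
    simp only [neg_ne_zero, ne_eq, ofReal_eq_zero]
    linarith
  exact (mul_ne_zero this hQw) hkey.symm

lemma Db_roots_nodup (hm : 1 ≤ m) (hl : ‖l‖ = 1)
    (hb : ∀ k, ‖b k‖ < 1) : (Db l b).roots.Nodup := by
  have hl0 := hl0_of hl
  rw [Multiset.nodup_iff_count_le_one]
  intro w
  by_cases hw : w ∈ (Db l b).roots
  · have hroot : (Db l b).IsRoot w := isRoot_of_mem_roots hw
    rw [count_roots]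
    by_contra hcount
    push_neg at hcount
    have h1 : 1 < (Db l b).rootMultiplicity w := hcount
    rw [one_lt_rootMultiplicity_iff_isRoot (Db_ne_zero l b hl0)] at h1
    exact deriv_ne_zero_at_root hm hl hb hroot h1.2
  · rw [Multiset.count_eq_zero_of_notMem hw]; norm_num

end RootsFinset

section Lagrange
variable {m : ℕ} {l : ℂ} {b : Fin m → ℂ}

lemma Db_toFinset_card (hm : 1 ≤ m) (hl : ‖l‖ = 1)
    (hb : ∀ k, ‖b k‖ < 1) :
    ((Db l b).roots.toFinset).card = m + 1 := by
  rw [Multiset.toFinset_card_of_nodup (Db_roots_nodup hm hl hb), Db_roots_card (hl0_of hl)]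

lemma Db_mem_toFinset (hl : ‖l‖ = 1) {w : ℂ} :
    w ∈ (Db l b).roots.toFinset ↔ (Db l b).IsRoot w := by
  rw [Multiset.mem_toFinset, mem_roots (Db_ne_zero l b (hl0_of hl))]

lemma Db_factor (hm : 1 ≤ m) (hl : ‖l‖ = 1) (hb : ∀ k, ‖b k‖ < 1) :
    Db l b = C (-l) * ∏ x ∈ (Db l b).roots.toFinset, (X - C x) := by
  have h1 := Splits.eq_prod_roots (IsAlgClosed.splits (Db l b))
  rw [Db_leadingCoeff l b (hl0_of hl)] at h1
  have h2 : (∏ x ∈ (Db l b).roots.toFinset, (X - C x) : ℂ[X])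
      = (Multiset.map (fun a => X - C a) (Db l b).roots).prod := by
    rw [Finset.prod_eq_multiset_prod, Multiset.toFinset_val,
      Multiset.dedup_eq_self.2 (Db_roots_nodup hm hl hb)]
  rw [h2]
  exact h1

lemma prod_erase_monic (s : Finset ℂ) (w : ℂ) :
    ((s.erase w).prod (fun x => X - C x) : ℂ[X]).Monic :=
  monic_prod_of_monic _ _ fun x _ => monic_X_sub_C _

lemma prod_erase_natDegree (s : Finset ℂ) (w : ℂ) :
    ((s.erase w).prod (fun x => X - C x) : ℂ[X]).natDegree = (s.erase w).card := by
  rw [natDegree_prod]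
  · simp
  · intro x _; exact X_sub_C_ne_zero _

lemma Db_deriv_eval_root (hm : 1 ≤ m) (hl : ‖l‖ = 1)
    (hb : ∀ k, ‖b k‖ < 1) {w : ℂ} (hw : w ∈ (Db l b).roots.toFinset) :
    (Db l b).derivative.eval w
      = -l * ∏ x ∈ ((Db l b).roots.toFinset).erase w, (w - x) := by
  set s := (Db l b).roots.toFinset with hs
  rw [Db_factor hm hl hb, derivative_mul, derivative_C, zero_mul, zero_add, eval_mul, eval_C,
    derivative_finset_prod, eval_finset_sum]
  rw [Finset.sum_eq_single w]
  · rw [derivative_sub, derivative_X, derivative_C, sub_zero, mul_one, eval_prod]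
    simp only [eval_sub, eval_X, eval_C]
    rfl
  · intro x hx hxw
    rw [derivative_sub, derivative_X, derivative_C, sub_zero, mul_one, eval_prod]
    apply Finset.prod_eq_zero (i := w)
    · exact Finset.mem_erase.2 ⟨fun h => hxw h.symm, hw⟩
    · simp
  · intro h; exact absurd hw h

noncomputable def rfun (l : ℂ) (b : Fin m → ℂ) (w : ℂ) : ℂ :=
  (Pb l b).eval w / (Db l b).derivative.eval w

lemma rfun_eq (hm : 1 ≤ m) (hl : ‖l‖ = 1) (hb : ∀ k, ‖b k‖ < 1)
    {w : ℂ} (hroot : (Db l b).IsRoot w) :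
    rfun l b w = -(((1 / rho b w : ℝ)) : ℂ) := by
  have hw : ‖w‖ = 1 := root_abs_eq_one hl hb hroot
  have hw0 : w ≠ 0 := by intro h; rw [h] at hw; simp at hw
  have hQw : (Qb b).eval w ≠ 0 := Qb_eval_ne_zero hb hw.le
  have hrho : (1:ℝ) < rho b w := rho_gt_one hm hb hw
  have hrho0 : ((rho b w : ℝ) : ℂ) ≠ 0 := by
    simp only [ne_eq, ofReal_eq_zero]; linarith
  have hkey := deriv_root_eq hl hb hroot
  have heq : (Qb b).eval w = w * (Pb l b).eval w := by
    have h2 := hroot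
    rw [IsRoot, Db_eval, sub_eq_zero] at h2
    exact h2
  have hP : (Pb l b).eval w = (Qb b).eval w / w := by
    rw [heq]; field_simp
  have hD' : (Db l b).derivative.eval w = -(((rho b w : ℝ)) : ℂ) * (Qb b).eval w / w := by
    rw [eq_div_iff hw0]
    exact hkey
  rw [rfun, hP, hD']
  field_simp
  rw [ofReal_div, ofReal_one, mul_one_div_cancel hrho0]

end Lagrange

section PF
variable {m : ℕ} {l : ℂ} {b : Fin m → ℂ}

lemma lagrange_P (hm : 1 ≤ m) (hl : ‖l‖ = 1) (hb : ∀ k, ‖b k‖ < 1) :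
    Pb l b = ∑ w ∈ (Db l b).roots.toFinset,
      C (rfun l b w) * (C (-l) * ∏ x ∈ ((Db l b).roots.toFinset).erase w, (X - C x)) := by
  set s := (Db l b).roots.toFinset with hs
  have hcard : s.card = m + 1 := Db_toFinset_card hm hl hb
  have hdegsum : (∑ w ∈ s, C (rfun l b w) * (C (-l) * ∏ x ∈ s.erase w, (X - C x))).degree
      < (s.card : WithBot ℕ) := by
    refine lt_of_le_of_lt (degree_sum_le _ _) ?_
    rw [Finset.sup_lt_iff (by rw [hcard]; exact_mod_cast WithBot.bot_lt_coe (m+1))]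
    intro w hw
    have h1 : ((∏ x ∈ s.erase w, (X - C x)) : ℂ[X]).degree ≤ (m : WithBot ℕ) := by
      refine le_trans degree_le_natDegree ?_
      rw [prod_erase_natDegree, Finset.card_erase_of_mem hw, hcard]
      norm_num
    calc (C (rfun l b w) * (C (-l) * ∏ x ∈ s.erase w, (X - C x))).degree
        ≤ (C (rfun l b w)).degree + ((C (-l)).degree + (∏ x ∈ s.erase w, (X - C x)).degree) :=
          (degree_mul_le _ _).trans (add_le_add le_rfl (degree_mul_le _ _))
    _ ≤ 0 + (0 + (m : WithBot ℕ)) := add_le_add degree_C_le (add_le_add degree_C_le h1)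
    _ = (m : WithBot ℕ) := by simp
    _ < (s.card : WithBot ℕ) := by rw [hcard]; exact_mod_cast Nat.lt_succ_self m
  refine eq_of_degrees_lt_of_eval_finset_eq s ?_ hdegsum ?_
  · refine lt_of_le_of_lt (Pb_degree_le l b) ?_
    rw [hcard]; exact_mod_cast Nat.lt_succ_self m
  · intro y hy
    rw [eval_finset_sum]
    rw [Finset.sum_eq_single y]
    · simp only [eval_mul, eval_C, eval_prod, eval_sub, eval_X]
      have hne : (-l * ∏ x ∈ s.erase y, (y - x)) ≠ 0 :=
        mul_ne_zero (neg_ne_zero.2 (hl0_of hl))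
          (Finset.prod_ne_zero_iff.2 fun x hx => by
            intro h0
            have : y = x := by rwa [sub_eq_zero] at h0
            exact absurd this.symm (Finset.ne_of_mem_erase hx))
      rw [rfun, Db_deriv_eval_root hm hl hb hy, ← hs, div_mul_cancel₀ _ hne]
    · intro x hx hxy
      simp only [eval_mul, eval_C, eval_prod, eval_sub, eval_X]
      rw [Finset.prod_eq_zero (i := y) (Finset.mem_erase.2 ⟨fun h => hxy h.symm, hy⟩) (by simp)]
      ring
    · intro h; exact absurd hy h

lemma sum_rfun (hm : 1 ≤ m) (hl : ‖l‖ = 1) (hb : ∀ k, ‖b k‖ < 1) :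
    ∑ w ∈ (Db l b).roots.toFinset, rfun l b w = -1 := by
  set s := (Db l b).roots.toFinset with hs
  have hcard : s.card = m + 1 := Db_toFinset_card hm hl hb
  have hco := congrArg (fun p : ℂ[X] => p.coeff m) (lagrange_P hm hl hb)
  rw [Pb_coeff, finset_sum_coeff] at hco
  have hterm : ∀ w ∈ s, (C (rfun l b w) * (C (-l) * ∏ x ∈ s.erase w, (X - C x))).coeff m
      = rfun l b w * (-l) := by
    intro w hw
    have hmon := prod_erase_monic s w
    have hdeg : ((s.erase w).prod (fun x => X - C x) : ℂ[X]).natDegree = m := by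
      rw [prod_erase_natDegree, Finset.card_erase_of_mem hw, hcard]
      omega
    have h1 : ((s.erase w).prod (fun x => X - C x) : ℂ[X]).coeff m = 1 := by
      rw [← hdeg]; exact hmon.coeff_natDegree
    rw [← mul_assoc, ← C_mul, coeff_C_mul, h1, mul_one]
  rw [Finset.sum_congr rfl hterm] at hco
  rw [← Finset.sum_mul] at hco
  have hl0 := hl0_of hl
  exact mul_right_cancel₀ (neg_ne_zero.2 hl0)
    (show (∑ w ∈ s, rfun l b w) * (-l) = (-1) * (-l) by rw [← hco]; ring)

end PF

section PF2
variable {m : ℕ} {l : ℂ} {b : Fin m → ℂ}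

lemma root_facts (hm : 1 ≤ m) (hl : ‖l‖ = 1) (hb : ∀ k, ‖b k‖ < 1)
    {w : ℂ} (hw : w ∈ (Db l b).roots.toFinset) {z : ℂ} (hz : ‖z‖ < 1) :
    z - w ≠ 0 ∧ w ≠ 0 ∧ ‖w‖ = 1 := by
  have hroot : (Db l b).IsRoot w := (Db_mem_toFinset hl).1 hw
  have hw1 : ‖w‖ = 1 := root_abs_eq_one hl hb hroot
  have hw0 : w ≠ 0 := by intro h; rw [h] at hw1; simp at hw1
  refine ⟨?_, hw0, hw1⟩
  intro h0
  have : z = w := by rwa [sub_eq_zero] at h0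
  rw [this, hw1] at hz
  linarith

lemma partial_fraction (hm : 1 ≤ m) (hl : ‖l‖ = 1) (hb : ∀ k, ‖b k‖ < 1)
    {z : ℂ} (hz : ‖z‖ < 1) :
    (Pb l b).eval z / (Db l b).eval z
      = ∑ w ∈ (Db l b).roots.toFinset, rfun l b w / (z - w) := by
  set s := (Db l b).roots.toFinset with hs
  have hzw : ∀ w ∈ s, z - w ≠ 0 := fun w hw => (root_facts hm hl hb hw hz).1
  have hD : (Db l b).eval z = -l * ∏ x ∈ s, (z - x) := by
    conv_lhs => rw [Db_factor hm hl hb]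
    rw [eval_mul, eval_C, eval_prod]
    simp only [eval_sub, eval_X, eval_C]
    rfl
  have hP : (Pb l b).eval z
      = ∑ w ∈ s, rfun l b w * (-l * ∏ x ∈ s.erase w, (z - x)) := by
    conv_lhs => rw [lagrange_P hm hl hb]
    rw [eval_finset_sum, ← hs]
    refine Finset.sum_congr rfl fun w hw => ?_
    simp only [eval_mul, eval_C, eval_prod, eval_sub, eval_X]
  rw [hP, hD, Finset.sum_div]
  refine Finset.sum_congr rfl fun w hw => ?_
  have h1 : (∏ x ∈ s, (z - x)) = (∏ x ∈ s.erase w, (z - x)) * (z - w) :=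
    (Finset.prod_erase_mul s _ hw).symm
  have h2 : (∏ x ∈ s.erase w, (z - x)) ≠ 0 :=
    Finset.prod_ne_zero_iff.2 fun x hx => hzw x (Finset.mem_of_mem_erase hx)
  rw [h1]
  have hl0 := hl0_of hl
  rw [show rfun l b w * (-l * ∏ x ∈ s.erase w, (z - x)) = (rfun l b w / (z - w)) * (-l * ((∏ x ∈ s.erase w, (z - x)) * (z - w))) by field_simp [hzw w hw]]
  exact mul_div_cancel_right₀ _ (mul_ne_zero (neg_ne_zero.2 hl0) (mul_ne_zero h2 (hzw w hw)))

lemma sum_form (hm : 1 ≤ m) (hl : ‖l‖ = 1) (hb : ∀ k, ‖b k‖ < 1)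
    {z : ℂ} (hz : ‖z‖ < 1) :
    (Pb l b).eval z / (Db l b).eval z
      = ∑ w ∈ (Db l b).roots.toFinset,
          (((1 / rho b w : ℝ)) : ℂ) * (w⁻¹ / (1 - w⁻¹ * z)) := by
  rw [partial_fraction hm hl hb hz]
  refine Finset.sum_congr rfl fun w hw => ?_
  obtain ⟨hzw, hw0, hw1⟩ := root_facts hm hl hb hw hz
  rw [rfun_eq hm hl hb ((Db_mem_toFinset hl).1 hw)]
  have hwz : w - z ≠ 0 := sub_ne_zero.2 (Ne.symm (sub_ne_zero.1 hzw))
  have h1 : 1 - w⁻¹ * z ≠ 0 := by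
    rw [show (1:ℂ) - w⁻¹ * z = w⁻¹ * (w - z) by field_simp]
    exact mul_ne_zero (inv_ne_zero hw0) hwz
  have hkey : w⁻¹ / (1 - w⁻¹ * z) = -(1 / (z - w)) := by
    rw [show (1:ℂ) - w⁻¹ * z = w⁻¹ * (w - z) by field_simp]
    rw [show (w : ℂ)⁻¹ / (w⁻¹ * (w - z)) = 1 / (w - z) by
      rw [div_mul_eq_div_div]
      rw [div_self (inv_ne_zero hw0)]]
    rw [show z - w = -(w - z) by ring]
    rw [div_neg]
    ring
  rw [hkey]
  ring

end PF2

section Analytic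
variable {m : ℕ} {l : ℂ} {b : Fin m → ℂ}

lemma one_sub_mem_slitPlane {u : ℂ} (hu : ‖u‖ < 1) : 1 - u ∈ Complex.slitPlane := by
  rw [Complex.mem_slitPlane_iff]
  left
  have := Complex.re_le_norm u
  simp only [Complex.sub_re, Complex.one_re]
  linarith

lemma one_sub_ne_zero {u : ℂ} (hu : ‖u‖ < 1) : 1 - u ≠ 0 :=
  Complex.slitPlane_ne_zero (one_sub_mem_slitPlane hu)

lemma abs_inv_mul_lt {w z : ℂ} (hw : ‖w‖ = 1) (hz : ‖z‖ < 1) :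
    ‖w⁻¹ * z‖ < 1 := by
  rw [norm_mul, norm_inv, hw]
  simpa using hz

/-- derivative of `z ↦ log (1 - w⁻¹ z)` -/
lemma hasDerivAt_log_factor {w z : ℂ} (hw : ‖w‖ = 1) (hz : ‖z‖ < 1) :
    HasDerivAt (fun z => Complex.log (1 - w⁻¹ * z)) (-(w⁻¹) / (1 - w⁻¹ * z)) z := by
  have h1 : HasDerivAt (fun z : ℂ => 1 - w⁻¹ * z) (-(w⁻¹)) z := by
    simpa using ((hasDerivAt_id z).const_mul (w⁻¹)).const_sub 1
  exact h1.clog (one_sub_mem_slitPlane (abs_inv_mul_lt hw hz))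

end Analytic

lemma mem_ball_iff_abs {z : ℂ} : z ∈ ball (0:ℂ) 1 ↔ ‖z‖ < 1 := by
  rw [mem_ball, dist_zero_right]

theorem stmt5 (α : ℝ) (hα : α ∈ Set.Ioc (0:ℝ) 3) (m : ℕ) (hm : 1 ≤ m)
    (f : ℂ → ℂ) (hf : DifferentiableOn ℂ f (ball 0 1))
    (hf0 : f 0 = 0) (hf1 : deriv f 0 = 1)
    (hfd : ∀ z ∈ ball (0:ℂ) 1, deriv f z ≠ 0)
    (φ : ℂ → ℂ) (hφ : IsBlaschke m φ)
    (hrel : ∀ z ∈ ball (0:ℂ) 1,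
      deriv (deriv f) z / deriv f z = α * φ z / (1 - z * φ z)) :
    ∃ (ζ : Fin (m + 1) → ℂ) (t : Fin (m + 1) → ℝ),
      Function.Injective ζ ∧ (∀ k, ‖ζ k‖ = 1) ∧
      (∀ k, 0 < t k ∧ t k < 1) ∧ (∑ k, t k) = 1 ∧
      ∀ z ∈ ball (0:ℂ) 1,
        deriv f z = ∏ k, (1 - ζ k * z) ^ ((-(α * t k) : ℝ) : ℂ) := by
  obtain ⟨l, b, hl, hbball, hphi⟩ := hφ
  have hb : ∀ k, ‖b k‖ < 1 := fun k => mem_ball_iff_abs.1 (hbball k)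
  set s := (Db l b).roots.toFinset with hs
  have hcard : s.card = m + 1 := Db_toFinset_card hm hl hb
  set t0 : ℂ → ℝ := fun w => 1 / rho b w with ht0
  set cc : ℂ → ℂ := fun w => ((-(α * t0 w) : ℝ) : ℂ) with hcc
  set L : ℂ → ℂ := fun z => ∑ w ∈ s, cc w * Complex.log (1 - w⁻¹ * z) with hLdef
  set S : ℂ → ℂ := fun z => ∑ w ∈ s, cc w * (-(w⁻¹) / (1 - w⁻¹ * z)) with hSdef
  have hwprops : ∀ w ∈ s, ‖w‖ = 1 ∧ w ≠ 0 := by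
    intro w hw
    have hroot : (Db l b).IsRoot w := (Db_mem_toFinset hl).1 hw
    have hw1 : ‖w‖ = 1 := root_abs_eq_one hl hb hroot
    exact ⟨hw1, fun h => by rw [h] at hw1; simp at hw1⟩
  -- value of φ
  have hphiv : ∀ z : ℂ, φ z = (Pb l b).eval z / (Qb b).eval z := by
    intro z
    rw [hphi, Pb_eval, Qb_eval]
    simp only [Finset.prod_div_distrib]
    rw [mul_div_assoc]
  -- the ratio
  have hratio : ∀ z : ℂ, ‖z‖ < 1 →
      (α : ℂ) * φ z / (1 - z * φ z) = α * ((Pb l b).eval z / (Db l b).eval z) := by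
    intro z hz
    have hQ : (Qb b).eval z ≠ 0 := Qb_eval_ne_zero hb hz.le
    have hD : (Db l b).eval z ≠ 0 := Db_eval_ne_zero_ball hl hb hz
    rw [hphiv]
    have h1 : 1 - z * ((Pb l b).eval z / (Qb b).eval z) = (Db l b).eval z / (Qb b).eval z := by
      rw [Db_eval]
      field_simp
    rw [h1]
    field_simp
  -- S equals the ratio
  have hS : ∀ z : ℂ, ‖z‖ < 1 → S z = (α : ℂ) * φ z / (1 - z * φ z) := by
    intro z hz
    rw [hratio z hz, sum_form hm hl hb hz, Finset.mul_sum]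
    refine Finset.sum_congr rfl fun w hw => ?_
    rw [hcc, ht0]
    push_cast
    ring
  -- derivative of L
  have hL' : ∀ z : ℂ, ‖z‖ < 1 → HasDerivAt L (S z) z := by
    intro z hz
    rw [hSdef]
    apply HasDerivAt.fun_sum
    intro w hw
    exact (hasDerivAt_log_factor (hwprops w hw).1 hz).const_mul (cc w)
  -- analyticity of deriv f
  have hA : AnalyticOnNhd ℂ f (ball 0 1) := hf.analyticOnNhd isOpen_ball
  have hA' : AnalyticOnNhd ℂ (deriv f) (ball 0 1) := hA.deriv
  have hFd : ∀ z ∈ ball (0:ℂ) 1, HasDerivAt (deriv f) (deriv (deriv f) z) z :=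
    fun z hz => ((hA' z hz).differentiableAt).hasDerivAt
  have hF' : ∀ z ∈ ball (0:ℂ) 1, deriv (deriv f) z = S z * deriv f z := by
    intro z hz
    have h2 := hrel z hz
    rw [div_eq_iff (hfd z hz)] at h2
    rw [h2, hS z (mem_ball_iff_abs.1 hz)]
  -- the constancy argument
  have hh0 : ∀ z ∈ ball (0:ℂ) 1,
      HasDerivAt (fun z => deriv f z * Complex.exp (-(L z))) 0 z := by
    intro z hz
    have e1 : HasDerivAt (fun z => Complex.exp (-(L z)))
        (Complex.exp (-(L z)) * -(S z)) z :=
      ((hL' z (mem_ball_iff_abs.1 hz)).neg).cexp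
    have e2 := (hFd z hz).fun_mul e1
    refine e2.congr_deriv ?_
    rw [hF' z hz]
    ring
  have hconst : ∀ z ∈ ball (0:ℂ) 1,
      deriv f z * Complex.exp (-(L z)) = deriv f 0 * Complex.exp (-(L 0)) := by
    intro z hz
    refine (convex_ball (0:ℂ) 1).is_const_of_fderivWithin_eq_zero
      (fun y hy => ((hh0 y hy).differentiableAt).differentiableWithinAt) ?_ hz (by simp)
    intro y hy
    have h3 := (hh0 y hy).hasFDerivAt.hasFDerivWithinAt.fderivWithin
      (isOpen_ball.uniqueDiffWithinAt hy)
    rw [h3]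
    ext u
    simp
    try rfl
  have hL0 : L 0 = 0 := by
    rw [hLdef]
    simp [Complex.log_one]
  have hFz : ∀ z ∈ ball (0:ℂ) 1, deriv f z = Complex.exp (L z) := by
    intro z hz
    have h4 := hconst z hz
    rw [hf1, hL0, neg_zero, Complex.exp_zero, one_mul] at h4
    rw [Complex.exp_neg] at h4
    rwa [mul_inv_eq_one₀ (Complex.exp_ne_zero (L z))] at h4
  -- product form
  have hprod : ∀ z : ℂ, ‖z‖ < 1 →
      Complex.exp (L z) = ∏ w ∈ s, (1 - w⁻¹ * z) ^ (cc w) := by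
    intro z hz
    rw [hLdef]
    simp only []
    rw [Complex.exp_sum]
    refine Finset.prod_congr rfl fun w hw => ?_
    rw [cpow_def_of_ne_zero (one_sub_ne_zero (abs_inv_mul_lt (hwprops w hw).1 hz)), mul_comm]
  -- sum of t0 over s equals 1
  have hsum1 : ∑ w ∈ s, t0 w = 1 := by
    have h5 := sum_rfun hm hl hb
    have h6 : ∀ w ∈ s, rfun l b w = -((t0 w : ℝ) : ℂ) :=
      fun w hw => rfun_eq hm hl hb ((Db_mem_toFinset hl).1 hw)
    rw [Finset.sum_congr rfl h6] at h5
    have h7 : ((∑ w ∈ s, t0 w : ℝ) : ℂ) = ((1:ℝ) : ℂ) := by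
      push_cast
      have := congrArg Neg.neg h5
      simpa [Finset.sum_neg_distrib] using this
    exact_mod_cast h7
  -- reindexing
  have E : Fin (m + 1) ≃ {x // x ∈ s} := ((s.equivFin).trans (finCongr hcard)).symm
  refine ⟨fun j => ((E j : ℂ))⁻¹, fun j => t0 (E j), ?_, ?_, ?_, ?_, ?_⟩
  · intro j1 j2 hj
    exact E.injective (Subtype.coe_injective (inv_injective hj))
  · intro k
    rw [norm_inv, (hwprops _ (E k).2).1]
    norm_num
  · intro k
    have hρ : 1 < rho b (E k) := rho_gt_one hm hb (hwprops _ (E k).2).1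
    constructor
    · exact div_pos one_pos (by linarith)
    · show (1 : ℝ) / rho b (E k) < 1
      rw [div_lt_one (by linarith)]
      linarith
  · rw [← hsum1]
    rw [← Finset.sum_coe_sort s t0]
    exact Fintype.sum_equiv E _ _ (fun j => rfl)
  · intro z hz
    rw [hFz z hz, hprod z (mem_ball_iff_abs.1 hz)]
    rw [← Finset.prod_coe_sort s]
    exact (Fintype.prod_equiv E _ _ (fun j => rfl)).symm
end DerivId
end

section
/- Let α ∈ (0, 3], let m ≥ 1, and let f be analytic on 𝔻 with f'(z) = ∏_{k=1}^{m+1} (1 − ζ_k z)^{−α t_k}, where ζ₁, …, ζ_{m+1} ∈ 𝕋 are pairwise distinct and t₁, …, t_{m+1} are real numbers with 0 < t_k < 1 and t₁ + ⋯ + t_{m+1} = 1. Then there exists a finite Blaschke product φ of degree m such that f''(z)/f'(z) = α·φ(z)/(1 − z·φ(z)) for all z ∈ 𝔻. -/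
open Complex Metric

open Finset Polynomial


variable {m : ℕ}

noncomputable def Ef (ζ : Fin (m+1) → ℂ) (k : Fin (m+1)) (z : ℂ) : ℂ :=
  ∏ j ∈ Finset.univ.erase k, (1 - ζ j * z)

noncomputable def Pf (ζ : Fin (m+1) → ℂ) (t : Fin (m+1) → ℝ) (z : ℂ) : ℂ :=
  ∑ k, (t k : ℂ) * Ef ζ k z

noncomputable def Qf (ζ : Fin (m+1) → ℂ) (t : Fin (m+1) → ℝ) (z : ℂ) : ℂ :=
  ∑ k, (t k : ℂ) * ζ k * Ef ζ k z

noncomputable def Df (ζ : Fin (m+1) → ℂ) (z : ℂ) : ℂ := ∏ j, (1 - ζ j * z)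

lemma card_erase (k : Fin (m+1)) : (Finset.univ.erase k).card = m := by
  simp [Finset.card_erase_of_mem]

lemma PQD (ζ : Fin (m+1) → ℂ) (t : Fin (m+1) → ℝ) (hts : (∑ k, t k) = 1) (z : ℂ) :
    Pf ζ t z - z * Qf ζ t z = Df ζ z := by
  have h : ∀ k : Fin (m+1), (1 - ζ k * z) * Ef ζ k z = Df ζ z := fun k =>
    Finset.mul_prod_erase Finset.univ (fun j => 1 - ζ j * z) (Finset.mem_univ k)
  have hsum : (∑ k, (t k : ℂ)) = 1 := by
    rw [← Complex.ofReal_sum, hts, Complex.ofReal_one]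
  calc Pf ζ t z - z * Qf ζ t z
      = ∑ k, (t k : ℂ) * ((1 - ζ k * z) * Ef ζ k z) := by
        simp only [Pf, Qf, Finset.mul_sum, ← Finset.sum_sub_distrib]
        congr 1; funext k; ring
    _ = (∑ k, (t k : ℂ)) * Df ζ z := by
        simp only [h, ← Finset.sum_mul]
    _ = Df ζ z := by rw [hsum, one_mul]

lemma re_inv_half {w : ℂ} (hw : ‖w‖ ≤ 1) (hw1 : w ≠ 1) :
    (1:ℝ)/2 ≤ ((1 - w)⁻¹).re := by
  have hd : (1 - w) ≠ 0 := by
    intro h; apply hw1; have := sub_eq_zero.mp h; exact this.symm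
  have hre : w.re ≤ 1 := le_trans (Complex.re_le_norm w) hw
  have hsq : w.re ^ 2 + w.im ^ 2 ≤ 1 := by
    have := Complex.sq_norm w
    rw [Complex.normSq_apply] at this
    nlinarith [norm_nonneg w]
  have hrelt : w.re < 1 := by
    rcases lt_or_eq_of_le hre with h | h
    · exact h
    · exfalso; apply hw1
      have him : w.im = 0 := by nlinarith
      apply Complex.ext <;> simp [← h, him]
  have hpos : 0 < Complex.normSq (1 - w) := Complex.normSq_pos.mpr hd
  rw [Complex.inv_re, le_div_iff₀ hpos]
  have h1 : (1 - w).re = 1 - w.re := by simp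
  have h2 : Complex.normSq (1 - w) = (1 - w.re)^2 + w.im^2 := by
    rw [Complex.normSq_apply]; simp; ring
  rw [h1, h2]; nlinarith

variable {m : ℕ}

lemma Pf_ne_zero (ζ : Fin (m+1) → ℂ) (t : Fin (m+1) → ℝ)
    (hζ : Function.Injective ζ) (hζ1 : ∀ k, ‖ζ k‖ = 1)
    (ht : ∀ k, 0 < t k) (hts : (∑ k, t k) = 1)
    {z : ℂ} (hz : ‖z‖ ≤ 1) : Pf ζ t z ≠ 0 := by
  by_cases hc : ∃ k, ζ k * z = 1
  · obtain ⟨k, hk⟩ := hc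
    have hz0 : z ≠ 0 := by rintro rfl; simp at hk
    have hother : ∀ j, j ≠ k → Ef ζ j z = 0 := by
      intro j hj
      apply Finset.prod_eq_zero (i := k)
      · exact Finset.mem_erase.mpr ⟨(by exact fun h => hj h.symm), Finset.mem_univ k⟩
      · rw [hk]; ring
    have hPf : Pf ζ t z = (t k : ℂ) * Ef ζ k z := by
      rw [Pf, Finset.sum_eq_single k]
      · intro j _ hj; rw [hother j hj, mul_zero]
      · intro h; exact absurd (Finset.mem_univ k) h
    rw [hPf]
    apply mul_ne_zero
    · exact_mod_cast (ht k).ne'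
    · apply Finset.prod_ne_zero_iff.mpr
      intro j hj
      intro h0
      have : ζ j * z = 1 := by linear_combination -h0
      have : ζ j = ζ k := by
        have hzz : (ζ j - ζ k) * z = 0 := by linear_combination this - hk
        rcases mul_eq_zero.mp hzz with h | h
        · exact sub_eq_zero.mp h
        · exact absurd h hz0
      exact (Finset.mem_erase.mp hj).1 (hζ this)
  · push_neg at hc
    have hfac : ∀ k : Fin (m+1), (1 - ζ k * z) ≠ 0 := by
      intro k h0
      exact hc k (by linear_combination -h0)
    have hEf : ∀ k, (t k : ℂ) * Ef ζ k z = Df ζ z * ((t k : ℂ) * (1 - ζ k * z)⁻¹) := by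
      intro k
      rw [Df, ← Finset.mul_prod_erase Finset.univ (fun j => 1 - ζ j * z) (Finset.mem_univ k)]
      rw [← Ef]
      field_simp [hfac k]
    have hPf : Pf ζ t z = Df ζ z * ∑ k, (t k : ℂ) * (1 - ζ k * z)⁻¹ := by
      rw [Pf, Finset.mul_sum]
      exact Finset.sum_congr rfl fun k _ => hEf k
    rw [hPf]
    apply mul_ne_zero
    · exact Finset.prod_ne_zero_iff.mpr fun k _ => hfac k
    · intro h0
      have hre : (1:ℝ)/2 ≤ (∑ k, (t k : ℂ) * (1 - ζ k * z)⁻¹).re := by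
        rw [Complex.re_sum]
        have : ∀ k : Fin (m+1), t k * (1/2 : ℝ) ≤ ((t k : ℂ) * (1 - ζ k * z)⁻¹).re := by
          intro k
          have habs : ‖ζ k * z‖ ≤ 1 := by
            rw [norm_mul, hζ1 k, one_mul]; exact hz
          have hne1 : ζ k * z ≠ 1 := hc k
          have := re_inv_half habs hne1
          rw [Complex.re_ofReal_mul]
          nlinarith [(ht k).le]
        calc (1:ℝ)/2 = ∑ k, t k * (1/2 : ℝ) := by rw [← Finset.sum_mul, hts]; ring
          _ ≤ _ := Finset.sum_le_sum fun k _ => this k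
      rw [h0] at hre
      norm_num at hre

variable {m : ℕ}

lemma unim {ζ : Fin (m+1) → ℂ} (hζ1 : ∀ k, ‖ζ k‖ = 1) (k : Fin (m+1)) :
    (starRingEnd ℂ) (ζ k) * ζ k = 1 := by
  rw [mul_comm, Complex.mul_conj, ← Complex.sq_norm, hζ1, one_pow, Complex.ofReal_one]

lemma QfA (ζ : Fin (m+1) → ℂ) (t : Fin (m+1) → ℝ)
    (hζ1 : ∀ k, ‖ζ k‖ = 1) {z : ℂ} (hz : z ≠ 0) :
    Qf ζ t z =
      (-1:ℂ)^m * (∏ j, ζ j) * z^m * (starRingEnd ℂ) (Pf ζ t ((starRingEnd ℂ) z)⁻¹) := by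
  have hzc : (starRingEnd ℂ) ((starRingEnd ℂ) z)⁻¹ = z⁻¹ := by
    rw [map_inv₀, Complex.conj_conj]
  rw [Pf, map_sum, Finset.mul_sum, Qf]
  apply Finset.sum_congr rfl
  intro k _
  rw [map_mul, Complex.conj_ofReal]
  simp only [Ef, map_prod]
  have hconj : ∀ j ∈ Finset.univ.erase k,
      (starRingEnd ℂ) (1 - ζ j * ((starRingEnd ℂ) z)⁻¹) = 1 - (starRingEnd ℂ) (ζ j) * z⁻¹ := by
    intro j _
    rw [map_sub, map_one, map_mul, hzc]
  rw [Finset.prod_congr rfl hconj]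
  have hzm : z ^ m = ∏ _j ∈ Finset.univ.erase k, z := by
    rw [Finset.prod_const, card_erase]
  have step1 : z ^ m * ∏ j ∈ Finset.univ.erase k, (1 - (starRingEnd ℂ) (ζ j) * z⁻¹)
      = ∏ j ∈ Finset.univ.erase k, (z - (starRingEnd ℂ) (ζ j)) := by
    rw [hzm, ← Finset.prod_mul_distrib]
    apply Finset.prod_congr rfl
    intro j _
    field_simp
  have step2 : ∏ j ∈ Finset.univ.erase k, (z - (starRingEnd ℂ) (ζ j))
      = (-1:ℂ)^m * (∏ j ∈ Finset.univ.erase k, (starRingEnd ℂ) (ζ j)) * Ef ζ k z := by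
    have : ∀ j ∈ Finset.univ.erase k, z - (starRingEnd ℂ) (ζ j)
        = (-1) * (starRingEnd ℂ) (ζ j) * (1 - ζ j * z) := by
      intro j _
      have := unim hζ1 j
      linear_combination (-z) * this
    rw [Finset.prod_congr rfl this, Finset.prod_mul_distrib, Finset.prod_mul_distrib,
      Finset.prod_const, card_erase, Ef]
  have step3 : (∏ j, ζ j) * (∏ j ∈ Finset.univ.erase k, (starRingEnd ℂ) (ζ j)) = ζ k := by
    rw [← Finset.mul_prod_erase Finset.univ ζ (Finset.mem_univ k), mul_assoc,
      ← Finset.prod_mul_distrib]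
    have : ∀ j ∈ Finset.univ.erase k, ζ j * (starRingEnd ℂ) (ζ j) = 1 := by
      intro j _; rw [mul_comm]; exact unim hζ1 j
    rw [Finset.prod_congr rfl this, Finset.prod_const_one, mul_one]
  calc (t k : ℂ) * ζ k * Ef ζ k z
      = (t k : ℂ) * ((∏ j, ζ j) * (∏ j ∈ Finset.univ.erase k, (starRingEnd ℂ) (ζ j)))
          * Ef ζ k z := by rw [step3]
    _ = (-1:ℂ)^m * (∏ j, ζ j) *
        ((t k : ℂ) * ((-1:ℂ)^m * (∏ j ∈ Finset.univ.erase k, (starRingEnd ℂ) (ζ j)) * Ef ζ k z)) := by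
        have hsq : (-1:ℂ)^m * (-1:ℂ)^m = 1 := by
          rw [← mul_pow]; norm_num
        linear_combination (-((t k : ℂ) * (∏ j, ζ j) *
          (∏ j ∈ Finset.univ.erase k, (starRingEnd ℂ) (ζ j)) * Ef ζ k z)) * hsq
    _ = _ := by rw [← step2, ← step1]; ring

variable {m : ℕ}

noncomputable def Pp (ζ : Fin (m+1) → ℂ) (t : Fin (m+1) → ℝ) : Polynomial ℂ :=
  ∑ k, Polynomial.C (t k : ℂ) * ∏ j ∈ Finset.univ.erase k, (1 - Polynomial.C (ζ j) * Polynomial.X)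

lemma Pp_eval (ζ : Fin (m+1) → ℂ) (t : Fin (m+1) → ℝ) (z : ℂ) :
    (Pp ζ t).eval z = Pf ζ t z := by
  simp [Pp, Pf, Ef, Polynomial.eval_finset_sum, Polynomial.eval_prod]

lemma Pp_natDegree_le (ζ : Fin (m+1) → ℂ) (t : Fin (m+1) → ℝ) : (Pp ζ t).natDegree ≤ m := by
  apply Polynomial.natDegree_sum_le_of_forall_le
  intro k _
  refine le_trans (Polynomial.natDegree_mul_le) ?_
  rw [Polynomial.natDegree_C, zero_add]
  refine le_trans (Polynomial.natDegree_prod_le _ _) ?_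
  have h1 : ∀ j ∈ Finset.univ.erase k, ((1 : ℂ[X]) - Polynomial.C (ζ j) * Polynomial.X).natDegree ≤ 1 := by
    intro j _
    refine le_trans (Polynomial.natDegree_sub_le _ _) ?_
    simp only [Polynomial.natDegree_one]
    have := Polynomial.natDegree_C_mul_le (ζ j) (Polynomial.X : ℂ[X])
    simp only [Polynomial.natDegree_X] at this
    omega
  have h2 : ∑ j ∈ Finset.univ.erase k, ((1 : ℂ[X]) - Polynomial.C (ζ j) * Polynomial.X).natDegree
      ≤ ∑ _j ∈ Finset.univ.erase k, 1 := Finset.sum_le_sum h1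
  refine le_trans h2 ?_
  rw [Finset.sum_const, card_erase, smul_eq_mul, mul_one]

lemma Pf_zero (ζ : Fin (m+1) → ℂ) (t : Fin (m+1) → ℝ) (hts : (∑ k, t k) = 1) :
    Pf ζ t 0 = 1 := by
  simp only [Pf, Ef, mul_zero, sub_zero, Finset.prod_const_one, mul_one]
  rw [← Complex.ofReal_sum, hts, Complex.ofReal_one]

lemma Pp_ne_zero (ζ : Fin (m+1) → ℂ) (t : Fin (m+1) → ℝ) (hts : (∑ k, t k) = 1) :
    Pp ζ t ≠ 0 := by
  intro h
  have := Pp_eval ζ t 0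
  rw [h, Pf_zero ζ t hts] at this
  simp at this

lemma Pp_card_roots (ζ : Fin (m+1) → ℂ) (t : Fin (m+1) → ℝ) :
    Multiset.card (Pp ζ t).roots = (Pp ζ t).natDegree :=
  (Polynomial.splits_iff_card_roots).mp (IsAlgClosed.splits _)

lemma Pf_factor (ζ : Fin (m+1) → ℂ) (t : Fin (m+1) → ℝ) (z : ℂ) :
    Pf ζ t z = (Pp ζ t).leadingCoeff * ((Pp ζ t).roots.map (fun w => z - w)).prod := by
  conv_lhs => rw [← Pp_eval ζ t z]
  conv_lhs => rw [(IsAlgClosed.splits (Pp ζ t)).eq_prod_roots]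
  rw [Polynomial.eval_mul, Polynomial.eval_C, Polynomial.eval_multiset_prod, Multiset.map_map]
  congr 1
  refine congrArg Multiset.prod (Multiset.map_congr rfl ?_)
  intro w _
  simp

lemma roots_abs_gt (ζ : Fin (m+1) → ℂ) (t : Fin (m+1) → ℝ)
    (hζ : Function.Injective ζ) (hζ1 : ∀ k, ‖ζ k‖ = 1)
    (ht : ∀ k, 0 < t k) (hts : (∑ k, t k) = 1)
    {w : ℂ} (hw : w ∈ (Pp ζ t).roots) : 1 < ‖w‖ := by
  by_contra h
  push_neg at h
  have hroot : (Pp ζ t).eval w = 0 := (Polynomial.mem_roots (Pp_ne_zero ζ t hts)).mp hw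
  rw [Pp_eval] at hroot
  exact Pf_ne_zero ζ t hζ hζ1 ht hts h hroot

variable {m : ℕ}

noncomputable def Qp (ζ : Fin (m+1) → ℂ) (t : Fin (m+1) → ℝ) : Polynomial ℂ :=
  ∑ k, Polynomial.C ((t k : ℂ) * ζ k) *
    ∏ j ∈ Finset.univ.erase k, (1 - Polynomial.C (ζ j) * Polynomial.X)

lemma Qp_eval (ζ : Fin (m+1) → ℂ) (t : Fin (m+1) → ℝ) (z : ℂ) :
    (Qp ζ t).eval z = Qf ζ t z := by
  simp [Qp, Qf, Ef, Polynomial.eval_finset_sum, Polynomial.eval_prod, mul_assoc]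

noncomputable def Bp (ζ : Fin (m+1) → ℂ) (t : Fin (m+1) → ℝ) : Polynomial ℂ :=
  Polynomial.C ((-1:ℂ)^m * (∏ j, ζ j) * (starRingEnd ℂ) (Pp ζ t).leadingCoeff) *
    Polynomial.X ^ (m - (Pp ζ t).natDegree) *
    ((Pp ζ t).roots.map (fun w => 1 - Polynomial.C ((starRingEnd ℂ) w) * Polynomial.X)).prod

lemma Bp_eval (ζ : Fin (m+1) → ℂ) (t : Fin (m+1) → ℝ) (z : ℂ) :
    (Bp ζ t).eval z = (-1:ℂ)^m * (∏ j, ζ j) * (starRingEnd ℂ) (Pp ζ t).leadingCoeff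
      * z ^ (m - (Pp ζ t).natDegree)
      * ((Pp ζ t).roots.map (fun w => 1 - (starRingEnd ℂ) w * z)).prod := by
  rw [Bp, Polynomial.eval_mul, Polynomial.eval_mul, Polynomial.eval_C, Polynomial.eval_pow,
    Polynomial.eval_X, Polynomial.eval_multiset_prod, Multiset.map_map]
  congr 1
  refine congrArg Multiset.prod (Multiset.map_congr rfl ?_)
  intro w _
  simp

/-- The reflection identity: `Qf = eval Bp` everywhere. -/
lemma Qf_eq_Bp (ζ : Fin (m+1) → ℂ) (t : Fin (m+1) → ℝ)
    (hζ : Function.Injective ζ) (hζ1 : ∀ k, ‖ζ k‖ = 1)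
    (ht : ∀ k, 0 < t k) (hts : (∑ k, t k) = 1) (z : ℂ) :
    Qf ζ t z = (Bp ζ t).eval z := by
  have hdm : (Pp ζ t).natDegree ≤ m := Pp_natDegree_le ζ t
  have hcard : Multiset.card (Pp ζ t).roots = (Pp ζ t).natDegree := Pp_card_roots ζ t
  have key : ∀ x : ℂ, x ≠ 0 → Qf ζ t x = (Bp ζ t).eval x := by
    intro x hx
    rw [QfA ζ t hζ1 hx, Bp_eval]
    have hcx : (starRingEnd ℂ) x ≠ 0 := by simpa using hx
    have h1 : (starRingEnd ℂ) (Pf ζ t ((starRingEnd ℂ) x)⁻¹)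
        = (starRingEnd ℂ) (Pp ζ t).leadingCoeff *
          ((Pp ζ t).roots.map (fun w => x⁻¹ - (starRingEnd ℂ) w)).prod := by
      rw [Pf_factor ζ t, map_mul, map_multiset_prod, Multiset.map_map]
      congr 1
      refine congrArg Multiset.prod (Multiset.map_congr rfl ?_)
      intro w _
      simp [map_inv₀]
    have h2 : x ^ m = x ^ (m - (Pp ζ t).natDegree) * x ^ (Pp ζ t).natDegree := by
      rw [← pow_add, Nat.sub_add_cancel hdm]
    have h3 : x ^ (Pp ζ t).natDegree *
          ((Pp ζ t).roots.map (fun w => x⁻¹ - (starRingEnd ℂ) w)).prod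
        = ((Pp ζ t).roots.map (fun w => 1 - (starRingEnd ℂ) w * x)).prod := by
      have hxp : x ^ (Pp ζ t).natDegree = ((Pp ζ t).roots.map (fun _ => x)).prod := by
        rw [Multiset.map_const', Multiset.prod_replicate, hcard]
      rw [hxp, ← Multiset.prod_map_mul]
      refine congrArg Multiset.prod (Multiset.map_congr rfl ?_)
      intro w _
      field_simp
    rw [h1, h2]
    ring_nf
    rw [mul_comm (x ^ (Pp ζ t).natDegree)
      (((Pp ζ t).roots.map (fun w => x⁻¹ - (starRingEnd ℂ) w)).prod)] at *
    rw [show (fun w => 1 - x * (starRingEnd ℂ) w) = (fun w => 1 - (starRingEnd ℂ) w * x) from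
      funext fun w => by ring]
    linear_combination ((-1:ℂ)^m * (∏ j, ζ j) * (starRingEnd ℂ) (Pp ζ t).leadingCoeff
      * x ^ (m - (Pp ζ t).natDegree)) * h3
  -- extend to all z via polynomial identity
  have hpoly : Qp ζ t = Bp ζ t := by
    apply Polynomial.eq_of_infinite_eval_eq
    apply Set.Infinite.mono (s := {x : ℂ | x ≠ 0})
    · intro x hx
      simp only [Set.mem_setOf_eq]
      rw [Qp_eval]
      exact key x hx
    · exact (Set.finite_singleton (0:ℂ)).infinite_compl
  rw [← Qp_eval, hpoly]


variable {m : ℕ}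

lemma blaschke_main (ζ : Fin (m+1) → ℂ) (t : Fin (m+1) → ℝ)
    (hζ : Function.Injective ζ) (hζ1 : ∀ k, ‖ζ k‖ = 1)
    (ht : ∀ k, 0 < t k) (hts : (∑ k, t k) = 1) :
    ∃ φ : ℂ → ℂ, IsBlaschke m φ ∧
      ∀ z ∈ ball (0:ℂ) 1, φ z * Pf ζ t z = Qf ζ t z := by
  have hPne : Pp ζ t ≠ 0 := Pp_ne_zero ζ t hts
  set P := Pp ζ t with hP
  set d := P.natDegree with hd
  set R := P.roots with hRdef
  set L := P.leadingCoeff with hLdef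
  have hL : L ≠ 0 := Polynomial.leadingCoeff_ne_zero.mpr hPne
  have hdm : d ≤ m := Pp_natDegree_le ζ t
  have hcard : Multiset.card R = d := Pp_card_roots ζ t
  have habs : ∀ w ∈ R, 1 < ‖w‖ := fun w hw => roots_abs_gt ζ t hζ hζ1 ht hts hw
  have hR0 : ∀ w ∈ R, w ≠ 0 := by
    intro w hw h0
    have := habs w hw
    rw [h0, norm_zero] at this
    linarith
  set rl := R.toList with hrl
  have hrlmem : ∀ w ∈ rl, w ∈ R := by intro w hw; rwa [hrl, Multiset.mem_toList] at hw
  have hrlen : rl.length = d := by rw [hrl, Multiset.length_toList, hcard]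
  set bl := (rl.map fun w => ((starRingEnd ℂ) w)⁻¹) ++ List.replicate (m - d) (0:ℂ) with hbl
  have hlen : bl.length = m := by
    rw [hbl, List.length_append, List.length_map, List.length_replicate, hrlen]
    omega
  set b : Fin m → ℂ := fun i => bl.get (Fin.cast hlen.symm i) with hb
  set l : ℂ := (-1:ℂ)^m * (∏ j, ζ j) * ((starRingEnd ℂ) L / L) *
      ((R.map fun w => (starRingEnd ℂ) w / w).prod) with hl
  have hblmem : ∀ x ∈ bl, ‖x‖ < 1 := by
    intro x hx
    rw [hbl] at hx
    rcases List.mem_append.mp hx with hx | hx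
    · obtain ⟨w, hw, rfl⟩ := List.mem_map.mp hx
      have h1 : 1 < ‖w‖ := habs w (hrlmem w hw)
      rw [norm_inv, Complex.norm_conj]
      exact inv_lt_one_of_one_lt₀ h1
    · rw [List.eq_of_mem_replicate hx]
      simp
  refine ⟨fun z => l * ∏ k, (z - b k) / (1 - (starRingEnd ℂ) (b k) * z),
    ⟨l, b, ?_, ?_, rfl⟩, ?_⟩
  · -- |l| = 1
    rw [hl, norm_mul, norm_mul, norm_mul, norm_pow, norm_div]
    have h1 : ‖(-1 : ℂ)‖ = 1 := by simp
    have h2 : ‖∏ j, ζ j‖ = 1 := by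
      rw [norm_prod]
      simp [hζ1]
    have h3 : ‖L‖ ≠ 0 := norm_ne_zero_iff.mpr hL
    have h4 : ‖(R.map fun w => (starRingEnd ℂ) w / w).prod‖ = 1 := by
      rw [show ‖(R.map fun w => (starRingEnd ℂ) w / w).prod‖
        = normHom (R.map fun w => (starRingEnd ℂ) w / w).prod from rfl,
        map_multiset_prod, Multiset.map_map]
      have : ∀ x ∈ R.map (normHom ∘ fun w => (starRingEnd ℂ) w / w), x = 1 := by
        intro x hx
        obtain ⟨w, hw, rfl⟩ := Multiset.mem_map.mp hx
        simp only [Function.comp_apply, normHom_apply, norm_div, Complex.norm_conj]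
        exact div_self (norm_ne_zero_iff.mpr (hR0 w hw))
      exact Multiset.prod_eq_one this
    rw [h1, h2, one_pow, Complex.norm_conj, div_self h3, h4]
    norm_num
  · -- zeros in the ball
    intro k
    rw [mem_ball_zero_iff]
    have : b k ∈ bl := List.get_mem bl (Fin.cast hlen.symm k)
    simpa using hblmem _ this
  · -- the key identity
    intro z hz
    have hz1 : ‖z‖ < 1 := by rwa [mem_ball_zero_iff] at hz
    show l * (∏ k : Fin m, (z - b k) / (1 - (starRingEnd ℂ) (b k) * z)) * Pf ζ t z = _
    rw [Qf_eq_Bp ζ t hζ hζ1 ht hts z, Bp_eval, ← hP, ← hRdef, ← hLdef, ← hd]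
    -- convert Fin-product to list product
    have e1 : (∏ k, (z - b k) / (1 - (starRingEnd ℂ) (b k) * z))
        = (bl.map (fun x => (z - x) / (1 - (starRingEnd ℂ) x * z))).prod := by
      have e2 : bl.map (fun x => (z - x) / (1 - (starRingEnd ℂ) x * z))
          = List.ofFn (fun i => (z - bl.get i) / (1 - (starRingEnd ℂ) (bl.get i) * z)) := by
        conv_lhs => rw [← List.ofFn_get bl, List.map_ofFn]
        rfl
      rw [e2, List.prod_ofFn]
      exact (Fintype.prod_equiv (finCongr hlen)
        (fun i => (z - bl.get i) / (1 - (starRingEnd ℂ) (bl.get i) * z))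
        (fun k => (z - b k) / (1 - (starRingEnd ℂ) (b k) * z))
        (fun i => by simp [hb, Fin.cast_cast])).symm
    have e3 : (bl.map (fun x => (z - x) / (1 - (starRingEnd ℂ) x * z))).prod
        = (R.map (fun w => (z - ((starRingEnd ℂ) w)⁻¹) /
            (1 - (starRingEnd ℂ) (((starRingEnd ℂ) w)⁻¹) * z))).prod * z ^ (m - d) := by
      rw [hbl, List.map_append, List.prod_append, List.map_map, List.map_replicate,
        List.prod_replicate]
      congr 1
      · rw [← Multiset.prod_coe, ← Multiset.map_coe, hrl, Multiset.coe_toList]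
        rfl
      · congr 1
        simp
    -- per-element identity
    have hper : ∀ w ∈ R, ((starRingEnd ℂ) w / w) *
        (((z - ((starRingEnd ℂ) w)⁻¹) / (1 - (starRingEnd ℂ) (((starRingEnd ℂ) w)⁻¹) * z)) *
          (z - w)) = 1 - (starRingEnd ℂ) w * z := by
      intro w hw
      have hw1 : 1 < ‖w‖ := habs w hw
      have hw0 : w ≠ 0 := hR0 w hw
      have hcw0 : (starRingEnd ℂ) w ≠ 0 := by simpa using hw0
      have hwz : w - z ≠ 0 := by
        intro h
        have : w = z := by linear_combination h
        rw [this] at hw1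
        linarith
      rw [map_inv₀, Complex.conj_conj]
      have hden : 1 - w⁻¹ * z ≠ 0 := by
        intro h
        apply hwz
        field_simp at h
        linear_combination h
      field_simp
      ring
    have hprod : (R.map fun w => (starRingEnd ℂ) w / w).prod *
        ((R.map (fun w => (z - ((starRingEnd ℂ) w)⁻¹) /
            (1 - (starRingEnd ℂ) (((starRingEnd ℂ) w)⁻¹) * z))).prod *
          (R.map fun w => z - w).prod)
        = (R.map fun w => 1 - (starRingEnd ℂ) w * z).prod := by
      rw [← Multiset.prod_map_mul, ← Multiset.prod_map_mul]
      exact congrArg Multiset.prod (Multiset.map_congr rfl hper)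
    rw [e1, e3, Pf_factor ζ t z, ← hP, ← hRdef, ← hLdef, hl]
    rw [← hprod]
    have hc : (starRingEnd ℂ) L / L * L = (starRingEnd ℂ) L := div_mul_cancel₀ _ hL
    linear_combination ((-1:ℂ)^m * (∏ j, ζ j) *
      (Multiset.map (fun w => (starRingEnd ℂ) w / w) R).prod *
      (Multiset.map (fun w => (z - ((starRingEnd ℂ) w)⁻¹) /
        (1 - (starRingEnd ℂ) (((starRingEnd ℂ) w)⁻¹) * z)) R).prod *
      (Multiset.map (fun w => z - w) R).prod * z ^ (m - d)) * hc

theorem stmt6 (α : ℝ) (hα : α ∈ Set.Ioc (0:ℝ) 3) (m : ℕ) (hm : 1 ≤ m)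
    (ζ : Fin (m + 1) → ℂ) (t : Fin (m + 1) → ℝ)
    (hζ : Function.Injective ζ) (hζ1 : ∀ k, ‖ζ k‖ = 1)
    (ht : ∀ k, 0 < t k ∧ t k < 1) (hts : (∑ k, t k) = 1)
    (f : ℂ → ℂ) (hf : DifferentiableOn ℂ f (ball 0 1))
    (hf' : ∀ z ∈ ball (0:ℂ) 1,
      deriv f z = ∏ k, (1 - ζ k * z) ^ ((-(α * t k) : ℝ) : ℂ)) :
    ∃ φ : ℂ → ℂ, IsBlaschke m φ ∧
      ∀ z ∈ ball (0:ℂ) 1,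
        deriv (deriv f) z / deriv f z = α * φ z / (1 - z * φ z) := by
  obtain ⟨φ, hφB, hkey⟩ := blaschke_main ζ t hζ hζ1 (fun k => (ht k).1) hts
  refine ⟨φ, hφB, ?_⟩
  intro z hz
  have hz1 : ‖z‖ < 1 := by rwa [mem_ball_zero_iff] at hz
  set c : Fin (m+1) → ℂ := fun k => ((-(α * t k) : ℝ) : ℂ) with hc
  set g : ℂ → ℂ := fun z => ∏ k, (1 - ζ k * z) ^ (c k) with hg
  -- basic nonvanishing facts
  have hne : ∀ y : ℂ, ‖y‖ < 1 → ∀ k, (1 - ζ k * y) ≠ 0 := by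
    intro y hy k h0
    have : ‖ζ k * y‖ < 1 := by rw [norm_mul, hζ1, one_mul]; exact hy
    have h1 : ζ k * y = 1 := by linear_combination -h0
    rw [h1] at this; simp at this
  have hslit : ∀ k, (1 - ζ k * z) ∈ Complex.slitPlane := by
    intro k
    apply Complex.mem_slitPlane_iff.mpr
    left
    have h1 : ‖ζ k * z‖ < 1 := by rw [norm_mul, hζ1, one_mul]; exact hz1
    have h2 : (ζ k * z).re ≤ ‖ζ k * z‖ := Complex.re_le_norm _
    simp only [Complex.sub_re, Complex.one_re]
    linarith
  have hDf0 : Df ζ z ≠ 0 := Finset.prod_ne_zero_iff.mpr fun k _ => hne z hz1 k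
  have hEf0 : ∀ k, Ef ζ k z ≠ 0 :=
    fun k => Finset.prod_ne_zero_iff.mpr fun j _ => hne z hz1 j
  have hPf0 : Pf ζ t z ≠ 0 := Pf_ne_zero ζ t hζ hζ1 (fun k => (ht k).1) hts hz1.le
  have hg0 : g z ≠ 0 := by
    rw [hg]
    refine Finset.prod_ne_zero_iff.mpr fun k _ => ?_
    rw [Complex.cpow_def_of_ne_zero (hne z hz1 k)]
    exact Complex.exp_ne_zero _
  -- derivative of g
  have hgd : HasDerivAt g
      (∑ k, (∏ j ∈ Finset.univ.erase k, (1 - ζ j * z) ^ (c j)) •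
        (c k * (1 - ζ k * z) ^ (c k - 1) * (-ζ k))) z := by
    apply HasDerivAt.fun_finsetProd
    intro k _
    have hin : HasDerivAt (fun y : ℂ => 1 - ζ k * y) (-ζ k) z := by
      simpa using ((hasDerivAt_id z).const_mul (ζ k)).const_sub 1
    exact hin.cpow_const (hslit k)
  -- identify the sum
  have hsum : (∑ k, (∏ j ∈ Finset.univ.erase k, (1 - ζ j * z) ^ (c j)) •
        (c k * (1 - ζ k * z) ^ (c k - 1) * (-ζ k)))
      = g z * ((α : ℂ) * (Qf ζ t z / Df ζ z)) := by
    have hQD : Qf ζ t z / Df ζ z = ∑ k, (t k : ℂ) * ζ k / (1 - ζ k * z) := by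
      rw [Qf, Finset.sum_div]
      refine Finset.sum_congr rfl fun k _ => ?_
      have hDfk : Df ζ z = (1 - ζ k * z) * Ef ζ k z :=
        (Finset.mul_prod_erase Finset.univ (fun j => 1 - ζ j * z) (Finset.mem_univ k)).symm
      rw [hDfk, mul_div_mul_right _ _ (hEf0 k)]
    rw [hQD, Finset.mul_sum, Finset.mul_sum]
    refine Finset.sum_congr rfl fun k _ => ?_
    have h1 : (1 - ζ k * z) ^ (c k - 1) = (1 - ζ k * z) ^ (c k) / (1 - ζ k * z) := by
      rw [Complex.cpow_sub _ _ (hne z hz1 k), Complex.cpow_one]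
    have h2 : (∏ j ∈ Finset.univ.erase k, (1 - ζ j * z) ^ (c j)) * (1 - ζ k * z) ^ (c k)
        = g z := by
      rw [hg, mul_comm]
      exact Finset.mul_prod_erase Finset.univ (fun j => (1 - ζ j * z) ^ (c j))
        (Finset.mem_univ k)
    have h3 : -(c k) = (α : ℂ) * (t k : ℂ) := by rw [hc]; push_cast; ring
    rw [smul_eq_mul, h1, ← h2]
    linear_combination ((∏ j ∈ Finset.univ.erase k, (1 - ζ j * z) ^ (c j)) *
      (1 - ζ k * z) ^ (c k) * ζ k / (1 - ζ k * z)) * h3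
  -- compute deriv (deriv f) z
  have hfeq : deriv f =ᶠ[nhds z] g :=
    Filter.eventuallyEq_of_mem (isOpen_ball.mem_nhds hz) (fun y hy => hf' y hy)
  have hdd : deriv (deriv f) z = g z * ((α : ℂ) * (Qf ζ t z / Df ζ z)) := by
    rw [hfeq.deriv_eq, hgd.deriv, hsum]
  have hdf : deriv f z = g z := hf' z hz
  have eqL : deriv (deriv f) z / deriv f z = (α : ℂ) * Qf ζ t z / Df ζ z := by
    rw [hdd, hdf, mul_div_cancel_left₀ _ hg0, mul_div_assoc]
  -- right-hand side
  have hphi : φ z = Qf ζ t z / Pf ζ t z := (eq_div_iff hPf0).mpr (hkey z hz)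
  have h1z : 1 - z * φ z = Df ζ z / Pf ζ t z := by
    rw [eq_div_iff hPf0]
    linear_combination (-z) * (hkey z hz) + PQD ζ t hts z
  have hfin : (α:ℂ) * (Qf ζ t z / Pf ζ t z) / (Df ζ z / Pf ζ t z)
      = (α:ℂ) * Qf ζ t z / Df ζ z := by
    rw [mul_div_assoc, div_div_div_cancel_right₀ hPf0, ← mul_div_assoc]
  rw [eqL, h1z, hphi, hfin]
end

section
/- Let α ∈ (0, 3] and let f ∈ F(α). Then the pre-Schwarzian norm of f satisfies ‖P_f‖ = sup_{z∈𝔻} (1 − |z|²)·|f''(z)/f'(z)| ≤ 2α. -/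
open Complex Metric

theorem stmt12 (α : ℝ) (hα : α ∈ Set.Ioc (0:ℝ) 3) (f : ℂ → ℂ) (hF : MemF α f) :
    ∀ z ∈ ball (0:ℂ) 1,
      (1 - ‖z‖ ^ 2) * ‖deriv (deriv f) z / deriv f z‖ ≤ 2 * α := by
  obtain ⟨hα0, hα3⟩ := hα
  obtain ⟨hd, hf0, hdf0, hne, hre⟩ := hF
  have hαc : (α : ℂ) ≠ 0 := by exact_mod_cast hα0.ne'
  have hA : AnalyticOnNhd ℂ f (ball 0 1) := hd.analyticOnNhd isOpen_ball
  have hA1 : AnalyticOnNhd ℂ (deriv f) (ball 0 1) := hA.deriv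
  have hA2 : AnalyticOnNhd ℂ (deriv (deriv f)) (ball 0 1) := hA1.deriv
  have hd1 : DifferentiableOn ℂ (deriv f) (ball 0 1) := hA1.differentiableOn
  have hd2 : DifferentiableOn ℂ (deriv (deriv f)) (ball 0 1) := hA2.differentiableOn
  set u : ℂ → ℂ := fun z => z * deriv (deriv f) z / deriv f z with hu_def
  set q : ℂ → ℂ := fun z => ((2 / α : ℝ) : ℂ) * u z + 1 with hq_def
  have h0mem : (0 : ℂ) ∈ ball (0:ℂ) 1 := by simp
  have hq0 : q 0 = 1 := by simp [hq_def, hu_def]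
  -- positivity of real part of q
  have hqre : ∀ z ∈ ball (0:ℂ) 1, 0 < (q z).re := by
    intro z hz
    have h := hre z hz
    have hure : -(α / 2) < (u z).re := by
      have : (1 + z * deriv (deriv f) z / deriv f z).re = 1 + (u z).re := by
        simp [hu_def]
      rw [this] at h
      linarith
    have hre_q : (q z).re = (2 / α) * (u z).re + 1 := by
      simp [hq_def, Complex.add_re, Complex.mul_re]
    rw [hre_q]
    have h2α : 0 < 2 / α := by positivity
    have hmul := mul_lt_mul_of_pos_left hure h2α
    have heq : (2 / α) * -(α / 2) = -1 := by field_simp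
    rw [heq] at hmul
    linarith
  have hq1ne : ∀ z ∈ ball (0:ℂ) 1, q z + 1 ≠ 0 := by
    intro z hz h
    have := hqre z hz
    have : (q z + 1).re = (q z).re + 1 := by simp
    rw [h] at this
    simp at this
    linarith [hqre z hz]
  set w : ℂ → ℂ := fun z => (q z - 1) / (q z + 1) with hw_def
  have hwlt : ∀ z ∈ ball (0:ℂ) 1, ‖w z‖ < 1 := by
    intro z hz
    have hq := hqre z hz
    have habs : ‖q z - 1‖ < ‖q z + 1‖ := by
      apply lt_of_pow_lt_pow_left₀ 2 (norm_nonneg _)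
      rw [Complex.sq_norm, Complex.sq_norm]
      simp only [Complex.normSq_apply, Complex.sub_re, Complex.sub_im, Complex.add_re,
        Complex.add_im, Complex.one_re, Complex.one_im]
      nlinarith
    rw [hw_def]
    simp only [norm_div]
    rw [div_lt_one (lt_of_le_of_lt (norm_nonneg _) habs)]
    exact habs
  have hw0 : w 0 = 0 := by simp [hw_def, hq0]
  have hud : DifferentiableOn ℂ u (ball 0 1) :=
    (differentiableOn_id.mul hd2).div hd1 hne
  have hqd : DifferentiableOn ℂ q (ball 0 1) :=
    ((hud.const_mul _).add_const 1)
  have hwd : DifferentiableOn ℂ w (ball 0 1) :=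
    (hqd.sub_const 1).div (hqd.add_const 1) (hq1ne)
  have hmaps : Set.MapsTo w (ball 0 1) (ball 0 1) := by
    intro z hz
    rw [mem_ball_zero_iff]
    exact hwlt z hz
  have hschwarz : ∀ z ∈ ball (0:ℂ) 1, ‖w z‖ ≤ ‖z‖ := by
    intro z hz
    exact Complex.norm_le_norm_of_mapsTo_ball hwd (hmaps.mono_right ball_subset_closedBall) hw0 (mem_ball_zero_iff.1 hz)
  -- key bound away from 0
  have key : ∀ z ∈ ball (0:ℂ) 1, z ≠ 0 →
      ‖deriv (deriv f) z / deriv f z‖ ≤ α / (1 - ‖z‖) := by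
    intro z hz hz0
    have hz1 : ‖z‖ < 1 := mem_ball_zero_iff.1 hz
    have hwz : ‖w z‖ ≤ ‖z‖ := hschwarz z hz
    have h1w : (1 : ℂ) - w z ≠ 0 := by
      intro h
      have hwz1 : w z = 1 := by linear_combination -h
      have hlt := hwlt z hz
      rw [hwz1] at hlt
      simp at hlt
    have hq1 : q z + 1 ≠ 0 := hq1ne z hz
    -- identity q z - 1 = 2 w z / (1 - w z)
    have hid : q z - 1 = 2 * w z / (1 - w z) := by
      rw [eq_div_iff h1w, hw_def]
      field_simp
      ring
    have habsq : ‖q z - 1‖ ≤ 2 * ‖z‖ / (1 - ‖z‖) := by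
      rw [hid]
      rw [norm_div, norm_mul]
      have hden : 1 - ‖z‖ ≤ ‖1 - w z‖ := by
        calc 1 - ‖z‖ ≤ 1 - ‖w z‖ := by linarith
        _ ≤ ‖1 - w z‖ := by
            have := norm_sub_norm_le (1 : ℂ) (w z)
            simpa using this
      have hden0 : 0 < 1 - ‖z‖ := by linarith
      apply div_le_div₀ (by positivity)
      · simp only [Complex.norm_two]
        exact mul_le_mul_of_nonneg_left hwz (by norm_num)
      · exact hden0
      · exact hden
    -- u z = (α/2) (q z - 1)
    have huq : u z = ((α : ℂ) / 2) * (q z - 1) := by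
      rw [hq_def]
      push_cast
      field_simp
      ring
    have habsu : ‖u z‖ ≤ (α / 2) * (2 * ‖z‖ / (1 - ‖z‖)) := by
      rw [huq, norm_mul]
      have : ‖(α : ℂ) / 2‖ = α / 2 := by
        rw [norm_div, Complex.norm_real, Complex.norm_two, Real.norm_eq_abs, abs_of_pos hα0]
      rw [this]
      exact mul_le_mul_of_nonneg_left habsq (by positivity)
    have hz0' : ‖z‖ ≠ 0 := by simpa using hz0
    have huz : ‖u z‖ = ‖z‖ * ‖deriv (deriv f) z / deriv f z‖ := by
      rw [hu_def]
      simp only [norm_div, norm_mul]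
      rw [mul_div_assoc, ← norm_div]
    rw [huz] at habsu
    have hden0 : 0 < 1 - ‖z‖ := by linarith
    have habsz : 0 < ‖z‖ := lt_of_le_of_ne (norm_nonneg z) (Ne.symm hz0')
    rw [div_eq_mul_inv]
    calc ‖deriv (deriv f) z / deriv f z‖
        = (‖z‖ * ‖deriv (deriv f) z / deriv f z‖) / ‖z‖ :=
          (mul_div_cancel_left₀ _ hz0').symm
      _ ≤ (α / 2) * (2 * ‖z‖ / (1 - ‖z‖)) / ‖z‖ := by
          gcongr
      _ = α * (1 - ‖z‖)⁻¹ := by field_simp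
  intro z hz
  have hzabs : ‖z‖ < 1 := mem_ball_zero_iff.1 hz
  rcases eq_or_ne z 0 with rfl | hz0
  · -- z = 0 : limit argument
    have hc2 : ContinuousAt (deriv (deriv f)) 0 := (hA2 0 h0mem).continuousAt
    have hc1 : ContinuousAt (deriv f) 0 := (hA1 0 h0mem).continuousAt
    have hne0 : deriv f 0 ≠ 0 := hne 0 h0mem
    have hc : ContinuousAt (fun z => deriv (deriv f) z / deriv f z) 0 := hc2.div hc1 hne0
    have ht : Filter.Tendsto (fun z => ‖deriv (deriv f) z / deriv f z‖)
        (nhdsWithin 0 {(0:ℂ)}ᶜ) (nhds (‖deriv (deriv f) 0 / deriv f 0‖)) :=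
      (continuous_norm.continuousAt.comp hc).tendsto.mono_left nhdsWithin_le_nhds
    have ht2 : Filter.Tendsto (fun z : ℂ => α / (1 - ‖z‖))
        (nhdsWithin 0 {(0:ℂ)}ᶜ) (nhds α) := by
      have : ContinuousAt (fun z : ℂ => α / (1 - ‖z‖)) 0 := by
        apply ContinuousAt.div continuousAt_const
        · exact continuousAt_const.sub continuous_norm.continuousAt
        · simp
      have h := this.tendsto.mono_left (nhdsWithin_le_nhds (s := {(0:ℂ)}ᶜ))
      simpa using h
    have hev : ∀ᶠ z in nhdsWithin 0 {(0:ℂ)}ᶜ,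
        ‖deriv (deriv f) z / deriv f z‖ ≤ α / (1 - ‖z‖) := by
      have hball : ball (0:ℂ) 1 ∈ nhds (0:ℂ) := ball_mem_nhds 0 one_pos
      filter_upwards [self_mem_nhdsWithin, nhdsWithin_le_nhds hball] with x hx hxb
      exact key x hxb hx
    have hlim : ‖deriv (deriv f) 0 / deriv f 0‖ ≤ α :=
      le_of_tendsto_of_tendsto ht ht2 hev
    simp only [norm_zero]
    calc (1 - (0:ℝ) ^ 2) * ‖deriv (deriv f) 0 / deriv f 0‖
        = ‖deriv (deriv f) 0 / deriv f 0‖ := by ring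
      _ ≤ α := hlim
      _ ≤ 2 * α := by linarith
  · have hkey := key z hz hz0
    have hden0 : 0 < 1 - ‖z‖ := by linarith
    have h1z : 0 ≤ 1 - ‖z‖ ^ 2 := by nlinarith [norm_nonneg z]
    calc (1 - ‖z‖ ^ 2) * ‖deriv (deriv f) z / deriv f z‖
        ≤ (1 - ‖z‖ ^ 2) * (α / (1 - ‖z‖)) :=
          mul_le_mul_of_nonneg_left hkey h1z
      _ = α * (1 + ‖z‖) := by field_simp; ring
      _ ≤ 2 * α := by nlinarith [norm_nonneg z]
end

section
/- Let α ∈ (0, 3] and let f ∈ F(α). Then (1 + |z|)^{−α} ≤ |f'(z)| ≤ (1 − |z|)^{−α} for all z ∈ 𝔻. -/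
open Complex Metric

lemma hasDerivAt_log_abs {g : ℝ → ℂ} {d : ℂ} {t : ℝ} (hg : HasDerivAt g d t) (h0 : g t ≠ 0) :
    HasDerivAt (fun s => Real.log (‖g s‖)) ((d / g t).re) t := by
  have hre : HasDerivAt (fun s => (g s).re) d.re t :=
    Complex.reCLM.hasFDerivAt.comp_hasDerivAt t hg
  have him : HasDerivAt (fun s => (g s).im) d.im t :=
    Complex.imCLM.hasFDerivAt.comp_hasDerivAt t hg
  have hn : HasDerivAt (fun s => Complex.normSq (g s))
      (d.re * (g t).re + (g t).re * d.re + (d.im * (g t).im + (g t).im * d.im)) t := by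
    exact ((hre.mul hre).add (him.mul him)).congr_of_eventuallyEq
      (Filter.Eventually.of_forall fun s => by simp [Complex.normSq_apply])
  have hns : Complex.normSq (g t) ≠ 0 := by
    simpa [Complex.normSq_eq_zero] using h0
  have hlog := (hn.log hns).div_const 2
  have hfun : (fun s => Real.log (‖g s‖))
      = fun s => Real.log (Complex.normSq (g s)) / 2 := by
    funext s
    rw [Complex.norm_def, Real.log_sqrt (Complex.normSq_nonneg _)]
  rw [hfun]
  refine hlog.congr_deriv ?_
  rw [Complex.div_re]
  have hpos : (0:ℝ) < Complex.normSq (g t) := Complex.normSq_pos.mpr h0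
  field_simp
  ring

lemma re_bound_of_abs {x : ℂ} {r : ℝ} (hr0 : 0 ≤ r) (hr1 : r < 1)
    (hx : ‖x - 1‖ ≤ r * ‖x + 1‖) :
    1 - r ≤ x.re * (1 + r) ∧ x.re * (1 - r) ≤ 1 + r := by
  have h2 : ‖x - 1‖ ^ 2 ≤ (r * ‖x + 1‖) ^ 2 := by
    have := norm_nonneg (x - 1)
    nlinarith [norm_nonneg (x + 1)]
  rw [mul_pow, Complex.sq_norm, Complex.sq_norm] at h2
  simp only [Complex.normSq_apply, Complex.sub_re, Complex.sub_im, Complex.add_re,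
    Complex.add_im, Complex.one_re, Complex.one_im] at h2
  set a := x.re with ha
  set b := x.im with hb
  have hr2 : r ^ 2 ≤ 1 := by nlinarith
  have hb2 : (0:ℝ) ≤ (1 - r^2) * b^2 := mul_nonneg (by linarith) (sq_nonneg b)
  have hprod : ((1 + r) * a - (1 - r)) * ((1 - r) * a - (1 + r)) ≤ 0 := by nlinarith
  constructor
  · by_contra h
    push_neg at h
    have ha1 : a < 1 := by nlinarith
    have hf2 : (1 - r) * a - (1 + r) < 0 := by nlinarith
    have hf1 : (1 + r) * a - (1 - r) < 0 := by nlinarith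
    nlinarith [mul_pos (neg_pos.mpr hf1) (neg_pos.mpr hf2)]
  · by_contra h
    push_neg at h
    have ha1 : 1 < a := by nlinarith
    have hf2 : 0 < (1 - r) * a - (1 + r) := by nlinarith
    have hf1 : 0 < (1 + r) * a - (1 - r) := by nlinarith
    nlinarith [mul_pos hf1 hf2]

lemma herglotz_abs {q : ℂ → ℂ} (hd : DifferentiableOn ℂ q (ball 0 1))
    (h0 : q 0 = 1) (hre : ∀ w ∈ ball (0:ℂ) 1, 0 < (q w).re) :
    ∀ w ∈ ball (0:ℂ) 1, ‖q w - 1‖ ≤ ‖w‖ * ‖q w + 1‖ := by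
  have hne : ∀ w ∈ ball (0:ℂ) 1, q w + 1 ≠ 0 := by
    intro w hw h
    have h1 := hre w hw
    have h2 : (q w + 1).re = 0 := by rw [h]; simp
    rw [Complex.add_re, Complex.one_re] at h2
    linarith
  set W : ℂ → ℂ := fun w => (q w - 1) / (q w + 1) with hW
  have hWd : DifferentiableOn ℂ W (ball 0 1) :=
    (hd.sub (differentiableOn_const 1)).div (hd.add (differentiableOn_const 1)) hne
  have hW0 : W 0 = 0 := by simp [hW, h0]
  have hlt : ∀ w ∈ ball (0:ℂ) 1, ‖q w - 1‖ < ‖q w + 1‖ := by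
    intro w hw
    have h1 := hre w hw
    apply lt_of_pow_lt_pow_left₀ 2 (norm_nonneg _)
    rw [Complex.sq_norm, Complex.sq_norm]
    simp only [Complex.normSq_apply, Complex.sub_re, Complex.sub_im, Complex.add_re,
      Complex.add_im, Complex.one_re, Complex.one_im]
    nlinarith
  have hmaps : Set.MapsTo W (ball 0 1) (ball 0 1) := by
    intro w hw
    rw [mem_ball_zero_iff, hW]
    simp only [norm_div]
    exact (div_lt_one ((norm_nonneg _).trans_lt (hlt w hw))).mpr (hlt w hw)
  intro w hw
  have hs := Complex.norm_le_norm_of_mapsTo_ball hWd (hmaps.mono_right ball_subset_closedBall) hW0 (mem_ball_zero_iff.mp hw)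
  rw [hW] at hs
  simp only [norm_div] at hs
  have hpos : 0 < ‖q w + 1‖ := (norm_nonneg _).trans_lt (hlt w hw)
  calc ‖q w - 1‖
      = ‖q w - 1‖ / ‖q w + 1‖ * ‖q w + 1‖ := by field_simp
    _ ≤ ‖w‖ * ‖q w + 1‖ :=
        mul_le_mul_of_nonneg_right hs (norm_nonneg _)

theorem stmt13 (α : ℝ) (hα : α ∈ Set.Ioc (0:ℝ) 3) (f : ℂ → ℂ) (hF : MemF α f) :
    ∀ z ∈ ball (0:ℂ) 1,
      (1 + ‖z‖) ^ (-α) ≤ ‖deriv f z‖ ∧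
      ‖deriv f z‖ ≤ (1 - ‖z‖) ^ (-α) := by
  obtain ⟨hfd, hf0, hf'0, hf'ne, hRe⟩ := hF
  have hαpos : 0 < α := hα.1
  have hAn1 : AnalyticOnNhd ℂ (deriv f) (ball 0 1) := (hfd.analyticOnNhd isOpen_ball).deriv
  have hAn2 : AnalyticOnNhd ℂ (deriv (deriv f)) (ball 0 1) := hAn1.deriv
  -- the auxiliary function q with positive real part
  set q : ℂ → ℂ := fun w => ((2/α : ℝ) : ℂ) * (w * deriv (deriv f) w / deriv f w + ((α/2 : ℝ) : ℂ))
    with hqdef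
  have hqd : DifferentiableOn ℂ q (ball 0 1) := by
    intro w hw
    have h1 : DifferentiableAt ℂ (fun w => w * deriv (deriv f) w / deriv f w) w :=
      (differentiableAt_id.mul (hAn2 w hw).differentiableAt).div
        (hAn1 w hw).differentiableAt (hf'ne w hw)
    exact ((h1.add_const _).const_mul _).differentiableWithinAt
  have hq0 : q 0 = 1 := by
    simp only [hqdef, zero_mul, zero_div, zero_add]
    rw [← Complex.ofReal_mul, ← Complex.ofReal_one]
    congr 1
    field_simp
  have hqre : ∀ w, (q w).re = 2/α * ((w * deriv (deriv f) w / deriv f w).re + α/2) := by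
    intro w
    simp [hqdef, Complex.re_ofReal_mul, Complex.add_re, Complex.ofReal_re]
  have hqpos : ∀ w ∈ ball (0:ℂ) 1, 0 < (q w).re := by
    intro w hw
    have h1 := hRe w hw
    rw [Complex.add_re, Complex.one_re] at h1
    rw [hqre w]
    have h2 : 0 < 2/α := by positivity
    have h3 : 0 < (w * deriv (deriv f) w / deriv f w).re + α/2 := by linarith
    positivity
  -- key bound on the real part of z f''/f'
  have hkey : ∀ w ∈ ball (0:ℂ) 1,
      -α * ‖w‖ ≤ (w * deriv (deriv f) w / deriv f w).re * (1 + ‖w‖) ∧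
      (w * deriv (deriv f) w / deriv f w).re * (1 - ‖w‖) ≤ α * ‖w‖ := by
    intro w hw
    have hρ0 : 0 ≤ ‖w‖ := norm_nonneg w
    have hρ1 : ‖w‖ < 1 := mem_ball_zero_iff.mp hw
    obtain ⟨hL, hU⟩ := re_bound_of_abs hρ0 hρ1 (herglotz_abs hqd hq0 hqpos w hw)
    set s := (w * deriv (deriv f) w / deriv f w).re with hs
    set ρ := ‖w‖ with hρ
    rw [hqre w] at hL hU
    have hL' : α * (1 - ρ) ≤ (2*s + α) * (1 + ρ) := by
      have h1 := mul_le_mul_of_nonneg_left hL hαpos.le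
      calc α * (1-ρ) ≤ α * (2/α * (s + α/2) * (1+ρ)) := h1
        _ = (2*s+α)*(1+ρ) := by field_simp
    have hU' : (2*s + α) * (1 - ρ) ≤ α * (1 + ρ) := by
      have h1 := mul_le_mul_of_nonneg_left hU hαpos.le
      calc (2*s+α)*(1-ρ) = α * (2/α * (s + α/2) * (1-ρ)) := by field_simp
        _ ≤ α * (1 + ρ) := h1
    constructor
    · nlinarith [hL']
    · nlinarith [hU']
  intro z hz
  rcases eq_or_ne z 0 with rfl | hz0
  · simp [hf'0, Real.one_rpow]
  -- setup of the radial curve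
  have hr0 : 0 < ‖z‖ := norm_pos_iff.mpr hz0
  have hr1 : ‖z‖ < 1 := mem_ball_zero_iff.mp hz
  set r := ‖z‖ with hrdef
  set u : ℂ := z / (r : ℂ) with hudef
  have hrC : (r : ℂ) ≠ 0 := by exact_mod_cast hr0.ne'
  have hu : ‖u‖ = 1 := by
    rw [hudef, norm_div, Complex.norm_real, Real.norm_eq_abs, _root_.abs_of_pos hr0, ← hrdef, div_self hr0.ne']
  have hmem : ∀ t : ℝ, t ∈ Set.Icc 0 r → ((t:ℂ) * u) ∈ ball (0:ℂ) 1 := by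
    intro t ht
    rw [mem_ball_zero_iff, norm_mul, hu, mul_one, Complex.norm_real, Real.norm_eq_abs,
      _root_.abs_of_nonneg ht.1]
    linarith [ht.2]
  set g : ℝ → ℂ := fun t => deriv f ((t:ℂ) * u) with hgdef
  have hgne : ∀ t ∈ Set.Icc (0:ℝ) r, g t ≠ 0 := fun t ht => hf'ne _ (hmem t ht)
  have hgd : ∀ t ∈ Set.Icc (0:ℝ) r,
      HasDerivAt g (deriv (deriv f) ((t:ℂ)*u) * u) t := by
    intro t ht
    have hc : HasDerivAt (fun w : ℂ => w * u) u (t:ℂ) := by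
      simpa using (hasDerivAt_id ((t:ℝ):ℂ)).mul_const u
    have h1 := ((hAn1 _ (hmem t ht)).differentiableAt.hasDerivAt).comp ((t:ℝ):ℂ) hc
    exact h1.comp_ofReal
  set φ : ℝ → ℝ := fun t => Real.log (‖g t‖) with hφdef
  have hφd : ∀ t ∈ Set.Icc (0:ℝ) r,
      HasDerivAt φ ((deriv (deriv f) ((t:ℂ)*u) * u / g t).re) t :=
    fun t ht => hasDerivAt_log_abs (hgd t ht) (hgne t ht)
  -- bound on the logarithmic derivative
  have hDb : ∀ t ∈ Set.Ioo (0:ℝ) r,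
      -α ≤ (deriv (deriv f) ((t:ℂ)*u) * u / g t).re * (1 + t) ∧
      (deriv (deriv f) ((t:ℂ)*u) * u / g t).re * (1 - t) ≤ α := by
    intro t ht
    have htIcc : t ∈ Set.Icc (0:ℝ) r := ⟨ht.1.le, ht.2.le⟩
    have hwball := hmem t htIcc
    have hwabs : ‖(t:ℂ)*u‖ = t := by
      rw [norm_mul, hu, mul_one, Complex.norm_real, Real.norm_eq_abs, _root_.abs_of_pos ht.1]
    have hk := hkey _ hwball
    rw [hwabs] at hk
    have hsplit : ((t:ℂ)*u * deriv (deriv f) ((t:ℂ)*u) / deriv f ((t:ℂ)*u)).re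
        = t * (deriv (deriv f) ((t:ℂ)*u) * u / g t).re := by
      have h2 : (t:ℂ)*u * deriv (deriv f) ((t:ℂ)*u) / deriv f ((t:ℂ)*u)
          = (t:ℂ) * (deriv (deriv f) ((t:ℂ)*u) * u / g t) := by
        rw [hgdef]; ring
      rw [h2, Complex.re_ofReal_mul]
    rw [hsplit] at hk
    constructor
    · nlinarith [hk.1, ht.1]
    · nlinarith [hk.2, ht.1]
  have habs : 0 < ‖deriv f z‖ := norm_pos_iff.mpr (hf'ne z hz)
  have hgr : g r = deriv f z := by
    rw [hgdef]
    congr 1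
    rw [hudef]
    field_simp
  have hg0 : g 0 = 1 := by
    rw [hgdef]
    simpa using hf'0
  have hφ0 : φ 0 = 0 := by rw [hφdef]; simp [hg0]
  have hφr : φ r = Real.log (‖deriv f z‖) := by rw [hφdef]; simp [hgr]
  constructor
  -- lower bound
  · set ψ : ℝ → ℝ := fun t => φ t + α * Real.log (1 + t) with hψdef
    have hψd : ∀ t ∈ Set.Icc (0:ℝ) r, HasDerivAt ψ
        ((deriv (deriv f) ((t:ℂ)*u) * u / g t).re + α * (1/(1+t))) t := by
      intro t ht
      have hne : (1:ℝ) + t ≠ 0 := by linarith [ht.1]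
      exact (hφd t ht).add ((((hasDerivAt_id t).const_add 1).log hne).const_mul α)
    have hmono : MonotoneOn ψ (Set.Icc 0 r) := by
      apply monotoneOn_of_deriv_nonneg (convex_Icc 0 r)
      · intro t ht; exact (hψd t ht).continuousAt.continuousWithinAt
      · intro t ht
        rw [interior_Icc] at ht
        exact (hψd t (Set.Ioo_subset_Icc_self ht)).differentiableAt.differentiableWithinAt
      · intro t ht
        rw [interior_Icc] at ht
        rw [(hψd t (Set.Ioo_subset_Icc_self ht)).deriv]
        have hb := (hDb t ht).1
        have h1t : (0:ℝ) < 1 + t := by linarith [ht.1]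
        have heq : (deriv (deriv f) ((t:ℂ)*u) * u / g t).re + α * (1/(1+t))
            = ((deriv (deriv f) ((t:ℂ)*u) * u / g t).re * (1+t) + α) / (1+t) := by
          field_simp
        rw [heq]
        exact div_nonneg (by linarith) h1t.le
    have h01 := hmono (Set.left_mem_Icc.mpr hr0.le) (Set.right_mem_Icc.mpr hr0.le) hr0.le
    have hψ0 : ψ 0 = 0 := by simp [hψdef, hφ0]
    have hψr : ψ r = Real.log (‖deriv f z‖) + α * Real.log (1 + r) := by
      rw [hψdef]; simp [hφr]
    rw [hψ0, hψr] at h01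
    rw [Real.rpow_def_of_pos (by linarith : (0:ℝ) < 1 + r), ← Real.exp_log habs]
    apply Real.exp_le_exp.mpr
    linarith
  · set χ : ℝ → ℝ := fun t => φ t + α * Real.log (1 - t) with hχdef
    have hχd : ∀ t ∈ Set.Icc (0:ℝ) r, HasDerivAt χ
        ((deriv (deriv f) ((t:ℂ)*u) * u / g t).re + α * (-1/(1-t))) t := by
      intro t ht
      have hne : (1:ℝ) - t ≠ 0 := by
        have := ht.2; intro h; nlinarith
      exact (hφd t ht).add ((((hasDerivAt_id t).const_sub 1).log hne).const_mul α)
    have hanti : AntitoneOn χ (Set.Icc 0 r) := by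
      apply antitoneOn_of_deriv_nonpos (convex_Icc 0 r)
      · intro t ht; exact (hχd t ht).continuousAt.continuousWithinAt
      · intro t ht
        rw [interior_Icc] at ht
        exact (hχd t (Set.Ioo_subset_Icc_self ht)).differentiableAt.differentiableWithinAt
      · intro t ht
        rw [interior_Icc] at ht
        rw [(hχd t (Set.Ioo_subset_Icc_self ht)).deriv]
        have hb := (hDb t ht).2
        have h1t : (0:ℝ) < 1 - t := by linarith [ht.2]
        have heq : (deriv (deriv f) ((t:ℂ)*u) * u / g t).re + α * (-1/(1-t))
            = ((deriv (deriv f) ((t:ℂ)*u) * u / g t).re * (1-t) - α) / (1-t) := by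
          field_simp
          ring
        rw [heq]
        exact div_nonpos_of_nonpos_of_nonneg (by linarith) h1t.le
    have h01 := hanti (Set.left_mem_Icc.mpr hr0.le) (Set.right_mem_Icc.mpr hr0.le) hr0.le
    have hχ0 : χ 0 = 0 := by simp [hχdef, hφ0]
    have hχr : χ r = Real.log (‖deriv f z‖) + α * Real.log (1 - r) := by
      rw [hχdef]; simp [hφr]
    rw [hχ0, hχr] at h01
    rw [Real.rpow_def_of_pos (by linarith : (0:ℝ) < 1 - r), ← Real.exp_log habs]
    apply Real.exp_le_exp.mpr
    linarith
end

section
/- Let α ∈ (0, 3], let h ∈ F(α), let ω be analytic on 𝔻 with |ω(z)| < 1 for all z ∈ 𝔻, and let g be analytic on 𝔻 with g(0) = 0 and g' = ω·h'. Then the harmonic pre-Schwarzian derivative P_f(z) = h''(z)/h'(z) − conj(ω(z))·ω'(z)/(1 − |ω(z)|²) of the harmonic mapping f = h + conj(g) satisfies (1 − |z|²)·|P_f(z)| ≤ 2α + 1 for all z ∈ 𝔻, i.e. ‖P_f‖ ≤ 2α + 1. -/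
open Complex Metric Filter Topology

lemma normSq_moebius_identity (b u : ℂ) :
    normSq (1 - (starRingEnd ℂ) b * u) - normSq (u - b) = (1 - normSq b) * (1 - normSq u) := by
  simp only [normSq_apply, Complex.sub_re, Complex.sub_im, Complex.mul_re, Complex.mul_im,
    Complex.one_re, Complex.one_im, Complex.conj_re, Complex.conj_im]
  ring

lemma normSq_cayley_identity (w : ℂ) :
    normSq (w + 1) - normSq (w - 1) = 4 * w.re := by
  simp only [normSq_apply, Complex.sub_re, Complex.sub_im, Complex.add_re, Complex.add_im,
    Complex.one_re, Complex.one_im]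
  ring

lemma moebius_den_ne (b u : ℂ) (hb : ‖b‖ < 1) (hu : ‖u‖ < 1) :
    1 - (starRingEnd ℂ) b * u ≠ 0 := by
  intro hc
  have h1 : normSq (1 - (starRingEnd ℂ) b * u) = 0 := by rw [hc]; simp
  have h2 := normSq_moebius_identity b u
  have hb2 : normSq b < 1 := by nlinarith [Complex.sq_norm b, norm_nonneg b]
  have hu2 : normSq u < 1 := by nlinarith [Complex.sq_norm u, norm_nonneg u]
  have hp : (0:ℝ) < (1 - normSq b) * (1 - normSq u) := mul_pos (by linarith) (by linarith)
  nlinarith [normSq_nonneg (u - b)]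

lemma moebius_abs_lt (b u : ℂ) (hb : ‖b‖ < 1) (hu : ‖u‖ < 1) :
    ‖(u - b) / (1 - (starRingEnd ℂ) b * u)‖ < 1 := by
  rw [norm_div, div_lt_one (by
    rw [norm_pos_iff]; exact moebius_den_ne b u hb hu)]
  have h2 := normSq_moebius_identity b u
  have hb' : normSq b < 1 := by rw [← Complex.sq_norm]; nlinarith [norm_nonneg b]
  have hu' : normSq u < 1 := by rw [← Complex.sq_norm]; nlinarith [norm_nonneg u]
  have : normSq (u - b) < normSq (1 - (starRingEnd ℂ) b * u) := by nlinarith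
  have := (Real.sqrt_lt_sqrt (normSq_nonneg _) this)
  simpa [Complex.norm_def] using this

lemma schwarz_pick (ω : ℂ → ℂ) (hω : DifferentiableOn ℂ ω (ball 0 1))
    (hω1 : ∀ z ∈ ball (0:ℂ) 1, ‖ω z‖ < 1) (a : ℂ) (ha : a ∈ ball (0:ℂ) 1) :
    (1 - ‖a‖ ^ 2) * ‖deriv ω a‖ ≤ 1 - ‖ω a‖ ^ 2 := by
  have ha1 : ‖a‖ < 1 := mem_ball_zero_iff.mp ha
  set b := ω a with hbdef
  have hb1 : ‖b‖ < 1 := hω1 a ha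
  set M : ℂ → ℂ := fun w => (w + a) / (1 + (starRingEnd ℂ) a * w) with hMdef
  have hMeq : ∀ w, M w = (w - (-a)) / (1 - (starRingEnd ℂ) (-a) * w) := by
    intro w; simp [hMdef, sub_neg_eq_add]
  have hMmem : ∀ w ∈ ball (0:ℂ) 1, M w ∈ ball (0:ℂ) 1 := by
    intro w hw
    rw [mem_ball_zero_iff, hMeq]
    exact moebius_abs_lt (-a) w (by simpa using ha1) (mem_ball_zero_iff.mp hw)
  have hMden : ∀ w ∈ ball (0:ℂ) 1, 1 + (starRingEnd ℂ) a * w ≠ 0 := by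
    intro w hw
    have := moebius_den_ne (-a) w (by simpa using ha1) (mem_ball_zero_iff.mp hw)
    simpa [sub_neg_eq_add] using this
  set φ : ℂ → ℂ := fun w => (ω (M w) - b) / (1 - (starRingEnd ℂ) b * ω (M w)) with hφdef
  have hMdiff : DifferentiableOn ℂ M (ball 0 1) := by
    apply DifferentiableOn.div
    · exact (differentiable_id.add_const a).differentiableOn
    · exact ((differentiable_id.const_mul _).const_add 1).differentiableOn
    · exact hMden
  have hωM : DifferentiableOn ℂ (fun w => ω (M w)) (ball 0 1) :=
    hω.comp hMdiff hMmem
  have hφdiff : DifferentiableOn ℂ φ (ball 0 1) := by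
    apply DifferentiableOn.div
    · exact hωM.sub_const b
    · exact (DifferentiableOn.const_sub (hωM.const_mul _) 1)
    · intro w hw
      exact moebius_den_ne b (ω (M w)) hb1 (hω1 _ (hMmem w hw))
  have hM0 : M 0 = a := by simp [hMdef]
  have hφ0 : φ 0 = 0 := by simp [hφdef, hM0, hbdef]
  have hφmaps : Set.MapsTo φ (ball 0 1) (ball 0 1) := by
    intro w hw
    rw [mem_ball_zero_iff]
    exact moebius_abs_lt b (ω (M w)) hb1 (hω1 _ (hMmem w hw))
  have hMder : HasDerivAt M (1 - a * (starRingEnd ℂ) a) 0 := by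
    have h1 : HasDerivAt (fun w : ℂ => w + a) 1 0 := (hasDerivAt_id 0).add_const a
    have h2 : HasDerivAt (fun w : ℂ => 1 + (starRingEnd ℂ) a * w) ((starRingEnd ℂ) a) 0 := by
      simpa using (((hasDerivAt_id 0).const_mul ((starRingEnd ℂ) a)).const_add 1)
    have := h1.div h2 (by simp)
    refine this.congr_deriv ?_
    simp
  have hωa : HasDerivAt ω (deriv ω a) a :=
    (hω.differentiableAt (isOpen_ball.mem_nhds ha)).hasDerivAt
  have hcomp : HasDerivAt (fun w => ω (M w)) (deriv ω a * (1 - a * (starRingEnd ℂ) a)) 0 := by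
    have hωa' : HasDerivAt ω (deriv ω a) (M 0) := by rw [hM0]; exact hωa
    have := HasDerivAt.comp 0 hωa' hMder
    exact this
  have hbb : (1 : ℂ) - (starRingEnd ℂ) b * b ≠ 0 := by
    have := moebius_den_ne b b hb1 hb1; exact this
  have hφder : HasDerivAt φ
      (deriv ω a * (1 - a * (starRingEnd ℂ) a) / (1 - (starRingEnd ℂ) b * b)) 0 := by
    have h1 : HasDerivAt (fun w => ω (M w) - b) (deriv ω a * (1 - a * (starRingEnd ℂ) a)) 0 :=
      hcomp.sub_const b
    have h2 : HasDerivAt (fun w => 1 - (starRingEnd ℂ) b * ω (M w))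
        (-((starRingEnd ℂ) b * (deriv ω a * (1 - a * (starRingEnd ℂ) a)))) 0 := by
      simpa using (HasDerivAt.const_sub 1 (hcomp.const_mul ((starRingEnd ℂ) b)))
    have h3 := h1.div h2 (by simpa [hM0] using hbb)
    refine h3.congr_deriv ?_
    simp [hM0, ← hbdef]
    field_simp
  have hkey : ‖deriv φ 0‖ ≤ 1 :=
    Complex.norm_deriv_le_one_of_mapsTo_ball hφdiff (by rw [hφ0]; exact hφmaps.mono_right ball_subset_closedBall) one_pos
  rw [hφder.deriv] at hkey
  have e1 : (1 : ℂ) - a * (starRingEnd ℂ) a = ((1 - ‖a‖ ^ 2 : ℝ) : ℂ) := by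
    rw [Complex.mul_conj, ← Complex.sq_norm a]
    push_cast
    ring
  have e2 : (1 : ℂ) - (starRingEnd ℂ) b * b = ((1 - ‖b‖ ^ 2 : ℝ) : ℂ) := by
    rw [mul_comm, Complex.mul_conj, ← Complex.sq_norm b]
    push_cast
    ring
  rw [norm_div, norm_mul, e1, e2, Complex.norm_real, Real.norm_eq_abs, Complex.norm_real, Real.norm_eq_abs] at hkey
  have p1 : (0:ℝ) < 1 - ‖a‖ ^ 2 := by nlinarith [norm_nonneg a]
  have p2 : (0:ℝ) < 1 - ‖b‖ ^ 2 := by nlinarith [norm_nonneg b]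
  rw [abs_of_pos p1, abs_of_pos p2, div_le_one p2] at hkey
  linarith [hkey]

lemma part1 (α : ℝ) (hα0 : 0 < α) (h : ℂ → ℂ)
    (hd : DifferentiableOn ℂ h (ball 0 1))
    (hne : ∀ z ∈ ball (0:ℂ) 1, deriv h z ≠ 0)
    (hre : ∀ z ∈ ball (0:ℂ) 1, 1 - α / 2 < (1 + z * deriv (deriv h) z / deriv h z).re) :
    ∀ z ∈ ball (0:ℂ) 1,
      ‖deriv (deriv h) z / deriv h z‖ * (1 - ‖z‖) ≤ α := by
  set A : ℂ → ℂ := fun z => deriv (deriv h) z / deriv h z with hAdef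
  have han : AnalyticOnNhd ℂ h (ball 0 1) := hd.analyticOnNhd isOpen_ball
  have hAdiff : DifferentiableOn ℂ A (ball 0 1) :=
    han.deriv.deriv.differentiableOn.div han.deriv.differentiableOn hne
  set Q : ℂ → ℂ := fun z => 1 + ((2 / α : ℝ) : ℂ) * (z * A z) with hQdef
  have hcpos : (0:ℝ) < 2 / α := by positivity
  have hca : 2 / α * α = 2 := div_mul_cancel₀ 2 hα0.ne'
  have hQre : ∀ z ∈ ball (0:ℂ) 1, 0 < (Q z).re := by
    intro z hz
    have hx : -(α / 2) < (z * A z).re := by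
      have := hre z hz
      have e : (1 : ℂ) + z * deriv (deriv h) z / deriv h z = 1 + z * A z := by
        rw [hAdef]; ring
      rw [e] at this
      simp only [Complex.add_re, Complex.one_re] at this
      linarith
    have h2 := mul_lt_mul_of_pos_left hx hcpos
    have : (Q z).re = 1 + 2 / α * (z * A z).re := by
      simp [hQdef, Complex.add_re, Complex.re_ofReal_mul]
    rw [this]
    nlinarith
  have hQ0 : Q 0 = 1 := by simp [hQdef]
  have hQdiff : DifferentiableOn ℂ Q (ball 0 1) := by
    apply DifferentiableOn.const_add
    exact DifferentiableOn.const_mul (differentiableOn_id.mul hAdiff) _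
  have hden : ∀ z ∈ ball (0:ℂ) 1, Q z + 1 ≠ 0 := by
    intro z hz hc
    have h1 : (Q z + 1).re = 0 := by rw [hc]; simp
    simp only [Complex.add_re, Complex.one_re] at h1
    linarith [hQre z hz]
  set φ : ℂ → ℂ := fun z => (Q z - 1) / (Q z + 1) with hφdef
  have hφdiff : DifferentiableOn ℂ φ (ball 0 1) :=
    (hQdiff.sub_const 1).div (hQdiff.add_const 1) hden
  have hφ0 : φ 0 = 0 := by simp [hφdef, hQ0]
  have hφmaps : Set.MapsTo φ (ball 0 1) (ball 0 1) := by
    intro z hz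
    rw [mem_ball_zero_iff]
    have hlt : normSq (Q z - 1) < normSq (Q z + 1) := by
      have := normSq_cayley_identity (Q z)
      nlinarith [hQre z hz]
    show ‖(Q z - 1) / (Q z + 1)‖ < 1
    rw [norm_div, div_lt_one (by rw [norm_pos_iff]; exact hden z hz)]
    have := Real.sqrt_lt_sqrt (normSq_nonneg _) hlt
    simpa [Complex.norm_def] using this
  have hφ : ∀ z ∈ ball (0:ℂ) 1, ‖φ z‖ ≤ ‖z‖ := fun z hz =>
    Complex.norm_le_norm_of_mapsTo_ball hφdiff (hφmaps.mono_right ball_subset_closedBall) hφ0 (mem_ball_zero_iff.mp hz)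
  have hQbound : ∀ z ∈ ball (0:ℂ) 1,
      ‖Q z - 1‖ * (1 - ‖z‖) ≤ 2 * ‖z‖ := by
    intro z hz
    have e : Q z - 1 = φ z * (Q z + 1) := by
      show Q z - 1 = (Q z - 1) / (Q z + 1) * (Q z + 1)
      rw [div_mul_cancel₀ _ (hden z hz)]
    have h2 : ‖Q z + 1‖ ≤ ‖Q z - 1‖ + 2 := by
      calc ‖Q z + 1‖ = ‖(Q z - 1) + 2‖ := by ring_nf
      _ ≤ ‖Q z - 1‖ + ‖2‖ := norm_add_le _ _
      _ = ‖Q z - 1‖ + 2 := by simp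
    have h1 : ‖Q z - 1‖ ≤ ‖z‖ * (‖Q z - 1‖ + 2) := by
      calc ‖Q z - 1‖ = ‖φ z‖ * ‖Q z + 1‖ := by
            rw [e, norm_mul]
      _ ≤ ‖z‖ * (‖Q z - 1‖ + 2) :=
            mul_le_mul (hφ z hz) h2 (norm_nonneg _) (norm_nonneg _)
    nlinarith [norm_nonneg (Q z - 1), norm_nonneg z]
  have keyne : ∀ z ∈ ball (0:ℂ) 1, z ≠ 0 →
      ‖A z‖ * (1 - ‖z‖) ≤ α := by
    intro z hz hz0
    have haz : 0 < ‖z‖ := norm_pos_iff.mpr hz0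
    have e : ‖Q z - 1‖ = 2 / α * (‖z‖ * ‖A z‖) := by
      have e0 : Q z - 1 = ((2 / α : ℝ) : ℂ) * (z * A z) := by rw [hQdef]; ring
      rw [e0, norm_mul, Complex.norm_real, Real.norm_eq_abs, abs_of_pos hcpos, norm_mul]
    have hb := hQbound z hz
    rw [e] at hb
    have h7 : ‖z‖ * (‖A z‖ * (1 - ‖z‖)) ≤ ‖z‖ * α := by
      have h8 := mul_le_mul_of_nonneg_left hb (by positivity : (0:ℝ) ≤ α / 2)
      calc ‖z‖ * (‖A z‖ * (1 - ‖z‖))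
          = α / 2 * (2 / α * (‖z‖ * ‖A z‖) * (1 - ‖z‖)) := by
            field_simp
        _ ≤ α / 2 * (2 * ‖z‖) := h8
        _ = ‖z‖ * α := by ring
    exact le_of_mul_le_mul_left h7 haz
  intro z hz
  rcases eq_or_ne z 0 with rfl | hz0
  · have hcont : ContinuousAt A 0 :=
      (hAdiff.differentiableAt (isOpen_ball.mem_nhds (by simp))).continuousAt
    have t1 : Tendsto (fun w => ‖A w‖ * (1 - ‖w‖)) (𝓝[≠] (0:ℂ))
        (𝓝 (‖A 0‖ * (1 - ‖(0:ℂ)‖))) := by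
      apply Tendsto.mono_left _ nhdsWithin_le_nhds
      exact ((continuous_norm.continuousAt.comp hcont).mul
        (continuousAt_const.sub continuous_norm.continuousAt))
    have hev : ∀ᶠ w in 𝓝[≠] (0:ℂ),
        ‖A w‖ * (1 - ‖w‖) ≤ α := by
      have hball : ∀ᶠ w in 𝓝 (0:ℂ), w ∈ ball (0:ℂ) 1 :=
        isOpen_ball.eventually_mem (by simp)
      filter_upwards [hball.filter_mono nhdsWithin_le_nhds, self_mem_nhdsWithin] with w hw hw0
      exact keyne w hw hw0
    have h9 : ‖A 0‖ ≤ α := by simpa using le_of_tendsto t1 hev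
    show ‖A 0‖ * (1 - ‖(0:ℂ)‖) ≤ α
    simpa using h9
  · exact keyne z hz hz0

theorem stmt16 (α : ℝ) (hα : α ∈ Set.Ioc (0:ℝ) 3) (h : ℂ → ℂ) (hF : MemF α h)
    (ω : ℂ → ℂ) (hω : DifferentiableOn ℂ ω (ball 0 1))
    (hω1 : ∀ z ∈ ball (0:ℂ) 1, ‖ω z‖ < 1)
    (g : ℂ → ℂ) (hg : DifferentiableOn ℂ g (ball 0 1)) (hg0 : g 0 = 0)
    (hgd : ∀ z ∈ ball (0:ℂ) 1, deriv g z = ω z * deriv h z) :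
    ∀ z ∈ ball (0:ℂ) 1,
      (1 - ‖z‖ ^ 2) *
        ‖deriv (deriv h) z / deriv h z -
          (starRingEnd ℂ) (ω z) * deriv ω z / ((1 - ‖ω z‖ ^ 2 : ℝ) : ℂ)‖
        ≤ 2 * α + 1 := by
  obtain ⟨hα0, hα3⟩ := hα
  obtain ⟨hd, h0, hd1, hne, hre⟩ := hF
  intro z hz
  have hr1 : ‖z‖ < 1 := mem_ball_zero_iff.mp hz
  have hr0 : 0 ≤ ‖z‖ := norm_nonneg z
  set r := ‖z‖
  set t := ‖ω z‖ with htdef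
  have ht1 : t < 1 := hω1 z hz
  have ht0 : 0 ≤ t := norm_nonneg _
  have htp : (0:ℝ) < 1 - t ^ 2 := by nlinarith
  have h1 := part1 α hα0 h hd hne hre z hz
  have h2 := schwarz_pick ω hω hω1 z hz
  set d := ‖deriv ω z‖ with hddef
  have hd0 : 0 ≤ d := norm_nonneg _
  set aA := ‖deriv (deriv h) z / deriv h z‖ with haAdef
  have haA0 : 0 ≤ aA := norm_nonneg _
  -- abs of second term
  have e2 : ‖(starRingEnd ℂ) (ω z) * deriv ω z / ((1 - t ^ 2 : ℝ) : ℂ)‖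
      = t * d / (1 - t ^ 2) := by
    rw [norm_div, norm_mul, Complex.norm_conj, Complex.norm_real, Real.norm_eq_abs, abs_of_pos htp]
  -- triangle inequality
  have htri : ‖deriv (deriv h) z / deriv h z -
      (starRingEnd ℂ) (ω z) * deriv ω z / ((1 - t ^ 2 : ℝ) : ℂ)‖
      ≤ aA + t * d / (1 - t ^ 2) := by
    calc ‖_‖ ≤ aA +
        ‖(starRingEnd ℂ) (ω z) * deriv ω z / ((1 - t ^ 2 : ℝ) : ℂ)‖ :=
          norm_sub_le _ _
    _ = aA + t * d / (1 - t ^ 2) := by rw [e2]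
  have hr2 : (0:ℝ) ≤ 1 - r ^ 2 := by nlinarith
  have hfirst : (1 - r ^ 2) * aA ≤ 2 * α := by nlinarith [h1]
  have hsecond : (1 - r ^ 2) * (t * d / (1 - t ^ 2)) ≤ 1 := by
    rw [show (1 - r ^ 2) * (t * d / (1 - t ^ 2)) = t * ((1 - r ^ 2) * d) / (1 - t ^ 2) by ring,
      div_le_one htp]
    nlinarith [mul_nonneg (sub_nonneg.mpr ht1.le) (mul_nonneg hr2 hd0)]
  calc (1 - r ^ 2) * ‖deriv (deriv h) z / deriv h z -
        (starRingEnd ℂ) (ω z) * deriv ω z / ((1 - t ^ 2 : ℝ) : ℂ)‖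
      ≤ (1 - r ^ 2) * (aA + t * d / (1 - t ^ 2)) :=
        mul_le_mul_of_nonneg_left htri hr2
    _ = (1 - r ^ 2) * aA + (1 - r ^ 2) * (t * d / (1 - t ^ 2)) := by ring
    _ ≤ 2 * α + 1 := add_le_add hfirst hsecond
end
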